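/- arXiv:2003.13771 — 4 statements merged into one kernel-verified Lean document; each statement's English description precedes it below -/
import Mathlib

section
/- Exact remainder for the two-phase sampling correction: let D^F : 𝒲 × ℝ × ℝ → ℝ be bounded measurable and let G̃ : ℝ × 𝒲 → ℝ be a bounded measurable function with G̃(Y, W) = E[D^F(W, A, Y) ∣ σ(Y, W)] a.s. Then for every measurable g : ℝ × 𝒲 → ℝ with ε' ≤ g ≤ 1 for some ε' > 0 and every bounded measurable G : ℝ × 𝒲 → ℝ, E[(C / g(Y, W)) D^F(W, A, Y) − (C / g(Y, W) − 1) G(Y, W)] = E[D^F(W, A, Y)] + E[((g₀(Y, W) − g(Y, W)) / g(Y, W)) · (G̃(Y, W) − G(Y, W))]. In particular the bias due to the sampling correction is a product of the errors in the sampling mechanism and in the conditional influence-function regression. -/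
open MeasureTheory ProbabilityTheory
open scoped NNReal ENNReal

private lemma bdd_int {Ω : Type*} [MeasurableSpace Ω] {P : Measure Ω} [IsFiniteMeasure P]
    {f : Ω → ℝ} (hf : AEStronglyMeasurable f P) {M : ℝ} (hM : ∀ ω, |f ω| ≤ M) :
    Integrable f P :=
  ⟨hf, HasFiniteIntegral.of_bounded (C := M) (Filter.Eventually.of_forall fun ω => by
    simpa [Real.norm_eq_abs] using hM ω)⟩

private lemma abs_div_le' {x g M ε : ℝ} (hx : |x| ≤ M) (hε : 0 < ε) (h1 : ε ≤ g) :
    |x / g| ≤ M / ε := by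
  rw [abs_div, abs_of_pos (lt_of_lt_of_le hε h1)]
  exact div_le_div₀ (le_trans (abs_nonneg x) hx) hx hε h1

private lemma abs_mul_le' {a b A B : ℝ} (ha : |a| ≤ A) (hb : |b| ≤ B) : |a * b| ≤ A * B := by
  rw [abs_mul]
  exact mul_le_mul ha hb (abs_nonneg _) (le_trans (abs_nonneg _) ha)

/-- Key lemma: by conditional independence (CAR), the selection indicator `C` can be
replaced by the selection probability `g₀ (Y, W)` in integrals against any bounded
(here: arbitrary measurable, via measure equality) function of `(A, (Y, W))`. -/
private lemma key_swap {Ω 𝒲 : Type*} [MeasurableSpace Ω] [StandardBorelSpace Ω] [Nonempty Ω]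
    [MeasurableSpace 𝒲]
    (P : Measure Ω) [IsProbabilityMeasure P]
    (W : Ω → 𝒲) (hW : Measurable W)
    (A : Ω → ℝ) (hA : Measurable A)
    (Y : Ω → ℝ) (hY : Measurable Y)
    (C : Ω → ℝ) (hC : Measurable C) (hC01 : ∀ ω, C ω = 0 ∨ C ω = 1)
    (g₀ : ℝ × 𝒲 → ℝ) (hg₀_meas : Measurable g₀)
    (hg₀_bd : ∀ x, 0 ≤ g₀ x ∧ g₀ x ≤ 1)
    (hg₀_condexp :
      P[C | MeasurableSpace.comap (fun ω => (Y ω, W ω)) inferInstance]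
        =ᵐ[P] fun ω => g₀ (Y ω, W ω))
    (hCAR : CondIndepFun
      (MeasurableSpace.comap (fun ω => (Y ω, W ω)) inferInstance)
      ((hY.prodMk hW).comap_le) C A P)
    (F : ℝ × (ℝ × 𝒲) → ℝ) (hF : Measurable F) :
    ∫ ω, C ω * F (A ω, (Y ω, W ω)) ∂P
      = ∫ ω, g₀ (Y ω, W ω) * F (A ω, (Y ω, W ω)) ∂P := by
  have hZ : Measurable fun ω => (Y ω, W ω) := hY.prodMk hW
  set Z : Ω → ℝ × 𝒲 := fun ω => (Y ω, W ω) with hZdef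
  have hm : MeasurableSpace.comap Z inferInstance ≤ _ := hZ.comap_le
  have hC0 : ∀ ω, 0 ≤ C ω := fun ω => by rcases hC01 ω with h | h <;> simp [h]
  have hC1 : ∀ ω, |C ω| ≤ 1 := fun ω => by rcases hC01 ω with h | h <;> simp [h]
  have hg₀0 : ∀ ω, 0 ≤ g₀ (Z ω) := fun ω => (hg₀_bd (Z ω)).1
  have hg₀1 : ∀ ω, |g₀ (Z ω)| ≤ 1 := fun ω => by
    rw [abs_of_nonneg (hg₀_bd (Z ω)).1]; exact (hg₀_bd (Z ω)).2
  set c : Set Ω := C ⁻¹' {1} with hcdef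
  have hcm : MeasurableSet c := hC (measurableSet_singleton 1)
  have hCfun : C = c.indicator (fun _ => (1 : ℝ)) := by
    funext ω
    rcases hC01 ω with h | h
    · have hω : ω ∉ c := by simp [hcdef, h]
      simp [Set.indicator_of_notMem hω, h]
    · have hω : ω ∈ c := by simp [hcdef, h]
      simp [Set.indicator_of_mem hω, h]
  -- step 1: set-level identity, from conditional independence
  have hset : ∀ (s : Set ℝ) (t : Set (ℝ × 𝒲)), MeasurableSet s → MeasurableSet t →
      ∫ ω in A ⁻¹' s ∩ Z ⁻¹' t, C ω ∂P = ∫ ω in A ⁻¹' s ∩ Z ⁻¹' t, g₀ (Z ω) ∂P := by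
    intro s t hs ht
    have hZt : MeasurableSet[MeasurableSpace.comap Z inferInstance] (Z ⁻¹' t) := ⟨t, ht, rfl⟩
    have hAs : MeasurableSet (A ⁻¹' s) := hA hs
    have hmul := (condIndepFun_iff_condExp_inter_preimage_eq_mul (μ := P) hC hA).mp
      hCAR {1} s (measurableSet_singleton 1) hs
    have hCg : P⟦c|MeasurableSpace.comap Z inferInstance⟧ =ᵐ[P] fun ω => g₀ (Z ω) :=
      (condExp_congr_ae (Filter.EventuallyEq.of_eq hCfun.symm)).trans hg₀_condexp
    have hψm : StronglyMeasurable[MeasurableSpace.comap Z inferInstance] fun ω => g₀ (Z ω) :=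
      (hg₀_meas.comp (measurable_iff_comap_le.mpr le_rfl)).stronglyMeasurable
    have hιint : Integrable ((A ⁻¹' s).indicator fun _ => (1 : ℝ)) P :=
      (integrable_const (1 : ℝ)).indicator hAs
    have hpull := condExp_stronglyMeasurable_mul_of_bound hm hψm hιint 1
      (Filter.Eventually.of_forall fun ω => by
        simpa [Real.norm_eq_abs] using hg₀1 ω)
    have hcaint : Integrable ((c ∩ A ⁻¹' s).indicator fun _ => (1 : ℝ)) P :=
      (integrable_const (1 : ℝ)).indicator (hcm.inter hAs)
    have hind_eq : (A ⁻¹' s).indicator C = (c ∩ A ⁻¹' s).indicator fun _ => (1 : ℝ) := by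
      funext ω
      by_cases hω : ω ∈ A ⁻¹' s
      · rcases hC01 ω with h | h
        · have : ω ∉ c ∩ A ⁻¹' s := by simp [hcdef, h]
          simp [Set.indicator_of_mem hω, Set.indicator_of_notMem this, h]
        · have : ω ∈ c ∩ A ⁻¹' s := ⟨by simp [hcdef, h], hω⟩
          simp [Set.indicator_of_mem hω, Set.indicator_of_mem this, h]
      · have : ω ∉ c ∩ A ⁻¹' s := fun h => hω h.2
        simp [Set.indicator_of_notMem hω, Set.indicator_of_notMem this]
    calc ∫ ω in A ⁻¹' s ∩ Z ⁻¹' t, C ω ∂P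
        = ∫ ω in Z ⁻¹' t ∩ A ⁻¹' s, C ω ∂P := by rw [Set.inter_comm]
      _ = ∫ ω in Z ⁻¹' t, (A ⁻¹' s).indicator C ω ∂P := (setIntegral_indicator hAs).symm
      _ = ∫ ω in Z ⁻¹' t, (c ∩ A ⁻¹' s).indicator (fun _ => (1 : ℝ)) ω ∂P := by
          rw [hind_eq]
      _ = ∫ ω in Z ⁻¹' t, (P⟦c ∩ A ⁻¹' s|MeasurableSpace.comap Z inferInstance⟧) ω ∂P :=
          (setIntegral_condExp hm hcaint hZt).symm
      _ = ∫ ω in Z ⁻¹' t,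
            (P[(fun ω => g₀ (Z ω)) * (A ⁻¹' s).indicator (fun _ => (1 : ℝ))|MeasurableSpace.comap Z inferInstance]) ω ∂P := by
          refine setIntegral_congr_ae (hm _ hZt) ?_
          filter_upwards [hmul, hCg, hpull] with ω h1 h2 h3 _
          rw [h1, h2, h3]
          rfl
      _ = ∫ ω in Z ⁻¹' t,
            ((fun ω => g₀ (Z ω)) * (A ⁻¹' s).indicator (fun _ => (1 : ℝ))) ω ∂P := by
          refine setIntegral_condExp hm ?_ hZt
          refine bdd_int ((hg₀_meas.comp hZ).mul
            (measurable_const.indicator hAs)).aestronglyMeasurable (M := 1 * 1) fun ω => ?_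
          refine abs_mul_le' (hg₀1 ω) ?_
          by_cases hω : ω ∈ A ⁻¹' s <;>
            simp [Set.indicator_of_mem, Set.indicator_of_notMem, hω]
      _ = ∫ ω in Z ⁻¹' t, (A ⁻¹' s).indicator (fun ω => g₀ (Z ω)) ω ∂P := by
          refine setIntegral_congr_ae (hm _ hZt) (Filter.Eventually.of_forall fun ω _ => ?_)
          by_cases hω : ω ∈ A ⁻¹' s <;>
            simp [Set.indicator_of_mem, Set.indicator_of_notMem, hω]
      _ = ∫ ω in Z ⁻¹' t ∩ A ⁻¹' s, g₀ (Z ω) ∂P := setIntegral_indicator hAs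
      _ = ∫ ω in A ⁻¹' s ∩ Z ⁻¹' t, g₀ (Z ω) ∂P := by rw [Set.inter_comm]
  -- step 2: measure-level identity
  have hT : Measurable fun ω => (A ω, Z ω) := hA.prodMk hZ
  have hCint : Integrable C P := bdd_int hC.aestronglyMeasurable hC1
  have hg₀int : Integrable (fun ω => g₀ (Z ω)) P :=
    bdd_int (hg₀_meas.comp hZ).aestronglyMeasurable hg₀1
  have hfin : ∀ (f : Ω → ℝ), (∀ ω, |f ω| ≤ 1) → ∫⁻ ω, ENNReal.ofReal (f ω) ∂P ≠ ⊤ := by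
    intro f hf
    refine ne_top_of_le_ne_top (by simp : (∫⁻ _, 1 ∂P) ≠ ⊤) (lintegral_mono fun ω => ?_)
    exact ENNReal.ofReal_le_one.mpr (le_trans (le_abs_self _) (hf ω))
  haveI : IsFiniteMeasure (P.withDensity fun ω => ENNReal.ofReal (C ω)) :=
    isFiniteMeasure_withDensity (hfin C hC1)
  haveI : IsFiniteMeasure (P.withDensity fun ω => ENNReal.ofReal (g₀ (Z ω))) :=
    isFiniteMeasure_withDensity (hfin _ hg₀1)
  have hrect : ∀ (s : Set ℝ) (t : Set (ℝ × 𝒲)), MeasurableSet s → MeasurableSet t →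
      ((P.withDensity fun ω => ENNReal.ofReal (C ω)).map fun ω => (A ω, Z ω)) (s ×ˢ t)
        = ((P.withDensity fun ω => ENNReal.ofReal (g₀ (Z ω))).map fun ω => (A ω, Z ω))
            (s ×ˢ t) := by
    intro s t hs ht
    have hst : MeasurableSet (s ×ˢ t) := hs.prod ht
    have hpre : (fun ω => (A ω, Z ω)) ⁻¹' (s ×ˢ t) = A ⁻¹' s ∩ Z ⁻¹' t :=
      Set.mk_preimage_prod A Z
    have hE : MeasurableSet (A ⁻¹' s ∩ Z ⁻¹' t) := (hA hs).inter (hZ ht)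
    rw [Measure.map_apply hT hst, Measure.map_apply hT hst, hpre,
      withDensity_apply _ hE, withDensity_apply _ hE,
      ← ofReal_integral_eq_lintegral_ofReal hCint.restrict
        (Filter.Eventually.of_forall fun ω => hC0 ω),
      ← ofReal_integral_eq_lintegral_ofReal hg₀int.restrict
        (Filter.Eventually.of_forall fun ω => hg₀0 ω),
      hset s t hs ht]
  have hmapeq :
      ((P.withDensity fun ω => ENNReal.ofReal (C ω)).map fun ω => (A ω, Z ω))
        = ((P.withDensity fun ω => ENNReal.ofReal (g₀ (Z ω))).map fun ω => (A ω, Z ω)) := by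
    refine ext_of_generate_finite _ generateFrom_prod.symm isPiSystem_prod ?_ ?_
    · rintro u ⟨s, hs, t, ht, rfl⟩
      exact hrect s t hs ht
    · have := hrect Set.univ Set.univ MeasurableSet.univ MeasurableSet.univ
      rwa [Set.univ_prod_univ] at this
  -- step 3: integrate F against both measures
  have hInt : ∀ (f : Ω → ℝ), Measurable f → (∀ ω, 0 ≤ f ω) →
      (∫ p, F p ∂((P.withDensity fun ω => ENNReal.ofReal (f ω)).map fun ω => (A ω, Z ω)))
        = ∫ ω, f ω * F (A ω, Z ω) ∂P := by
    intro f hf hf0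
    rw [integral_map hT.aemeasurable hF.aestronglyMeasurable]
    have hcoe : (fun ω => ENNReal.ofReal (f ω))
        = fun ω => (((f ω).toNNReal : ℝ≥0) : ℝ≥0∞) := rfl
    rw [hcoe, integral_withDensity_eq_integral_smul
      (f := fun ω => (f ω).toNNReal) (measurable_real_toNNReal.comp hf)]
    refine integral_congr_ae (Filter.Eventually.of_forall fun ω => ?_)
    show (f ω).toNNReal • F (A ω, Z ω) = f ω * F (A ω, Z ω)
    rw [NNReal.smul_def, Real.coe_toNNReal _ (hf0 ω), smul_eq_mul]
  calc ∫ ω, C ω * F (A ω, Z ω) ∂P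
      = ∫ p, F p ∂((P.withDensity fun ω => ENNReal.ofReal (C ω)).map fun ω => (A ω, Z ω)) :=
        (hInt C hC hC0).symm
    _ = ∫ p, F p
          ∂((P.withDensity fun ω => ENNReal.ofReal (g₀ (Z ω))).map fun ω => (A ω, Z ω)) := by
        rw [hmapeq]
    _ = ∫ ω, g₀ (Z ω) * F (A ω, Z ω) ∂P := hInt _ (hg₀_meas.comp hZ) hg₀0

/-- Exact remainder for the two-phase sampling correction: the bias due to the
sampling correction is a product of the errors in the sampling mechanism and in
the conditional influence-function regression. -/
theorem two_phase_sampling_exact_remainder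
    {Ω 𝒲 : Type*} [MeasurableSpace Ω] [StandardBorelSpace Ω] [Nonempty Ω]
    [MeasurableSpace 𝒲]
    (P : Measure Ω) [IsProbabilityMeasure P]
    (W : Ω → 𝒲) (hW : Measurable W)
    (A : Ω → ℝ) (hA : Measurable A)
    (Y : Ω → ℝ) (hY : Measurable Y)
    (C : Ω → ℝ) (hC : Measurable C) (hC01 : ∀ ω, C ω = 0 ∨ C ω = 1)
    (g₀ : ℝ × 𝒲 → ℝ) (hg₀_meas : Measurable g₀)
    (ε : ℝ) (hε : 0 < ε) (hg₀_bd : ∀ x, ε ≤ g₀ x ∧ g₀ x ≤ 1)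
    (hg₀_condexp :
      P[C | MeasurableSpace.comap (fun ω => (Y ω, W ω)) inferInstance]
        =ᵐ[P] fun ω => g₀ (Y ω, W ω))
    (hCAR : CondIndepFun
      (MeasurableSpace.comap (fun ω => (Y ω, W ω)) inferInstance)
      ((hY.prodMk hW).comap_le) C A P)
    (DF : 𝒲 × ℝ × ℝ → ℝ) (hDF_meas : Measurable DF)
    (hDF_bd : ∃ M : ℝ, ∀ x, |DF x| ≤ M)
    (Gt : ℝ × 𝒲 → ℝ) (hGt_meas : Measurable Gt) (hGt_bd : ∃ M : ℝ, ∀ x, |Gt x| ≤ M)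
    (hGt_condexp :
      P[fun ω => DF (W ω, A ω, Y ω)
        | MeasurableSpace.comap (fun ω => (Y ω, W ω)) inferInstance]
        =ᵐ[P] fun ω => Gt (Y ω, W ω))
    (g : ℝ × 𝒲 → ℝ) (hg_meas : Measurable g)
    (ε' : ℝ) (hε' : 0 < ε') (hg_bd : ∀ x, ε' ≤ g x ∧ g x ≤ 1)
    (G : ℝ × 𝒲 → ℝ) (hG_meas : Measurable G) (hG_bd : ∃ M : ℝ, ∀ x, |G x| ≤ M) :
    ∫ ω, ((C ω / g (Y ω, W ω)) * DF (W ω, A ω, Y ω)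
        - (C ω / g (Y ω, W ω) - 1) * G (Y ω, W ω)) ∂P
      = (∫ ω, DF (W ω, A ω, Y ω) ∂P)
        + ∫ ω, ((g₀ (Y ω, W ω) - g (Y ω, W ω)) / g (Y ω, W ω))
            * (Gt (Y ω, W ω) - G (Y ω, W ω)) ∂P := by
  have hZ : Measurable fun ω => (Y ω, W ω) := hY.prodMk hW
  have hm : MeasurableSpace.comap (fun ω => (Y ω, W ω)) inferInstance ≤ _ := hZ.comap_le
  obtain ⟨M, hM⟩ := hDF_bd
  obtain ⟨N, hN⟩ := hGt_bd
  obtain ⟨K, hK⟩ := hG_bd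
  have hC0 : ∀ ω, 0 ≤ C ω := fun ω => by rcases hC01 ω with h | h <;> simp [h]
  have hC1 : ∀ ω, |C ω| ≤ 1 := fun ω => by rcases hC01 ω with h | h <;> simp [h]
  have hgpos : ∀ x, 0 < g x := fun x => lt_of_lt_of_le hε' (hg_bd x).1
  have hg₀bd' : ∀ x, 0 ≤ g₀ x ∧ g₀ x ≤ 1 := fun x =>
    ⟨le_of_lt (lt_of_lt_of_le hε (hg₀_bd x).1), (hg₀_bd x).2⟩
  have hg₀1 : ∀ x, |g₀ x| ≤ 1 := fun x => by
    rw [abs_of_nonneg (hg₀bd' x).1]; exact (hg₀bd' x).2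
  -- measurability of components
  have hDF' : Measurable fun ω => DF (W ω, A ω, Y ω) :=
    hDF_meas.comp (hW.prodMk (hA.prodMk hY))
  have hgZ : Measurable fun ω => g (Y ω, W ω) := hg_meas.comp hZ
  have hg₀Z : Measurable fun ω => g₀ (Y ω, W ω) := hg₀_meas.comp hZ
  have hGZ : Measurable fun ω => G (Y ω, W ω) := hG_meas.comp hZ
  have hGtZ : Measurable fun ω => Gt (Y ω, W ω) := hGt_meas.comp hZ
  -- the two applications of the key lemma
  have hF₁ : Measurable fun p : ℝ × (ℝ × 𝒲) => DF (p.2.2, p.1, p.2.1) / g p.2 :=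
    (hDF_meas.comp ((measurable_snd.snd).prodMk
      (measurable_fst.prodMk measurable_snd.fst))).div (hg_meas.comp measurable_snd)
  have hF₂ : Measurable fun p : ℝ × (ℝ × 𝒲) => G p.2 / g p.2 :=
    (hG_meas.comp measurable_snd).div (hg_meas.comp measurable_snd)
  have hkey₁ :
      ∫ ω, C ω * (DF (W ω, A ω, Y ω) / g (Y ω, W ω)) ∂P
        = ∫ ω, g₀ (Y ω, W ω) * (DF (W ω, A ω, Y ω) / g (Y ω, W ω)) ∂P :=
    key_swap P W hW A hA Y hY C hC hC01 g₀ hg₀_meas hg₀bd' hg₀_condexp hCAR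
      (fun p => DF (p.2.2, p.1, p.2.1) / g p.2) hF₁
  have hkey₂ :
      ∫ ω, C ω * (G (Y ω, W ω) / g (Y ω, W ω)) ∂P
        = ∫ ω, g₀ (Y ω, W ω) * (G (Y ω, W ω) / g (Y ω, W ω)) ∂P :=
    key_swap P W hW A hA Y hY C hC hC01 g₀ hg₀_meas hg₀bd' hg₀_condexp hCAR
      (fun p => G p.2 / g p.2) hF₂
  -- conditional-expectation step: replace DF by Gt against m-measurable weights
  have hDF'int : Integrable (fun ω => DF (W ω, A ω, Y ω)) P :=
    bdd_int hDF'.aestronglyMeasurable (fun ω => hM _)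
  have hψm : StronglyMeasurable[MeasurableSpace.comap (fun ω => (Y ω, W ω)) inferInstance]
      fun ω => g₀ (Y ω, W ω) / g (Y ω, W ω) :=
    ((hg₀_meas.div hg_meas).comp (measurable_iff_comap_le.mpr le_rfl)).stronglyMeasurable
  have hψbd : ∀ ω, ‖g₀ (Y ω, W ω) / g (Y ω, W ω)‖ ≤ 1 / ε' := fun ω => by
    rw [Real.norm_eq_abs]
    exact abs_div_le' (hg₀1 _) hε' (hg_bd _).1
  have hpull := condExp_stronglyMeasurable_mul_of_bound hm hψm hDF'int (1 / ε')
    (Filter.Eventually.of_forall hψbd)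
  have hstep2 :
      ∫ ω, g₀ (Y ω, W ω) * (DF (W ω, A ω, Y ω) / g (Y ω, W ω)) ∂P
        = ∫ ω, (g₀ (Y ω, W ω) / g (Y ω, W ω)) * Gt (Y ω, W ω) ∂P := by
    calc ∫ ω, g₀ (Y ω, W ω) * (DF (W ω, A ω, Y ω) / g (Y ω, W ω)) ∂P
        = ∫ ω, ((fun ω => g₀ (Y ω, W ω) / g (Y ω, W ω))
            * fun ω => DF (W ω, A ω, Y ω)) ω ∂P :=
          integral_congr_ae (Filter.Eventually.of_forall fun ω => by
            simp only [Pi.mul_apply]; ring)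
      _ = ∫ ω, (P[(fun ω => g₀ (Y ω, W ω) / g (Y ω, W ω))
            * fun ω => DF (W ω, A ω, Y ω)
            | MeasurableSpace.comap (fun ω => (Y ω, W ω)) inferInstance]) ω ∂P :=
          (integral_condExp hm).symm
      _ = ∫ ω, (g₀ (Y ω, W ω) / g (Y ω, W ω)) * Gt (Y ω, W ω) ∂P := by
          refine integral_congr_ae ?_
          filter_upwards [hpull, hGt_condexp] with ω h1 h2
          rw [h1]
          simp only [Pi.mul_apply]
          rw [h2]
  have hstep4 : ∫ ω, DF (W ω, A ω, Y ω) ∂P = ∫ ω, Gt (Y ω, W ω) ∂P :=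
    (integral_condExp hm).symm.trans (integral_congr_ae hGt_condexp)
  -- integrability of all the pieces
  have ia : Integrable (fun ω => C ω * (DF (W ω, A ω, Y ω) / g (Y ω, W ω))) P :=
    bdd_int ((hC.mul (hDF'.div hgZ)).aestronglyMeasurable) (M := 1 * (M / ε'))
      fun ω => abs_mul_le' (hC1 ω) (abs_div_le' (hM _) hε' (hg_bd _).1)
  have ib : Integrable (fun ω => C ω * (G (Y ω, W ω) / g (Y ω, W ω))) P :=
    bdd_int ((hC.mul (hGZ.div hgZ)).aestronglyMeasurable) (M := 1 * (K / ε'))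
      fun ω => abs_mul_le' (hC1 ω) (abs_div_le' (hK _) hε' (hg_bd _).1)
  have ic : Integrable (fun ω => G (Y ω, W ω)) P :=
    bdd_int hGZ.aestronglyMeasurable (fun ω => hK _)
  have i4 : Integrable (fun ω => (g₀ (Y ω, W ω) / g (Y ω, W ω)) * Gt (Y ω, W ω)) P :=
    bdd_int (((hg₀Z.div hgZ)).mul hGtZ).aestronglyMeasurable (M := 1 / ε' * N)
      fun ω => abs_mul_le' (abs_div_le' (hg₀1 _) hε' (hg_bd _).1) (hN _)
  have i5 : Integrable (fun ω => g₀ (Y ω, W ω) * (G (Y ω, W ω) / g (Y ω, W ω))) P :=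
    bdd_int (hg₀Z.mul (hGZ.div hgZ)).aestronglyMeasurable (M := 1 * (K / ε'))
      fun ω => abs_mul_le' (hg₀1 _) (abs_div_le' (hK _) hε' (hg_bd _).1)
  have iGt : Integrable (fun ω => Gt (Y ω, W ω)) P :=
    bdd_int hGtZ.aestronglyMeasurable (fun ω => hN _)
  have irem : Integrable (fun ω => ((g₀ (Y ω, W ω) - g (Y ω, W ω)) / g (Y ω, W ω))
      * (Gt (Y ω, W ω) - G (Y ω, W ω))) P :=
    bdd_int (((hg₀Z.sub hgZ).div hgZ).mul (hGtZ.sub hGZ)).aestronglyMeasurable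
      (M := (1 + 1) / ε' * (N + K)) fun ω => by
        refine abs_mul_le' (abs_div_le' ?_ hε' (hg_bd _).1) ?_
        · exact le_trans (abs_sub _ _) (add_le_add (hg₀1 _) (by
            rw [abs_of_pos (hgpos _)]; exact (hg_bd _).2))
        · exact le_trans (abs_sub _ _) (add_le_add (hN _) (hK _))
  -- put everything together
  calc ∫ ω, ((C ω / g (Y ω, W ω)) * DF (W ω, A ω, Y ω)
        - (C ω / g (Y ω, W ω) - 1) * G (Y ω, W ω)) ∂P
      = ∫ ω, (C ω * (DF (W ω, A ω, Y ω) / g (Y ω, W ω))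
          - C ω * (G (Y ω, W ω) / g (Y ω, W ω)) + G (Y ω, W ω)) ∂P :=
        integral_congr_ae (Filter.Eventually.of_forall fun ω => by ring)
    _ = (∫ ω, C ω * (DF (W ω, A ω, Y ω) / g (Y ω, W ω)) ∂P)
          - (∫ ω, C ω * (G (Y ω, W ω) / g (Y ω, W ω)) ∂P)
          + ∫ ω, G (Y ω, W ω) ∂P := by
        have h2 : ∫ ω, (C ω * (DF (W ω, A ω, Y ω) / g (Y ω, W ω))
              - C ω * (G (Y ω, W ω) / g (Y ω, W ω)) + G (Y ω, W ω)) ∂P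
            = (∫ ω, (C ω * (DF (W ω, A ω, Y ω) / g (Y ω, W ω))
                - C ω * (G (Y ω, W ω) / g (Y ω, W ω))) ∂P)
              + ∫ ω, G (Y ω, W ω) ∂P := integral_add (ia.sub ib) ic
        have h1 : ∫ ω, (C ω * (DF (W ω, A ω, Y ω) / g (Y ω, W ω))
              - C ω * (G (Y ω, W ω) / g (Y ω, W ω))) ∂P
            = (∫ ω, C ω * (DF (W ω, A ω, Y ω) / g (Y ω, W ω)) ∂P)
              - ∫ ω, C ω * (G (Y ω, W ω) / g (Y ω, W ω)) ∂P := integral_sub ia ib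
        rw [h2, h1]
    _ = (∫ ω, (g₀ (Y ω, W ω) / g (Y ω, W ω)) * Gt (Y ω, W ω) ∂P)
          - (∫ ω, g₀ (Y ω, W ω) * (G (Y ω, W ω) / g (Y ω, W ω)) ∂P)
          + ∫ ω, G (Y ω, W ω) ∂P := by
        rw [hkey₁, hkey₂, hstep2]
    _ = ∫ ω, ((g₀ (Y ω, W ω) / g (Y ω, W ω)) * Gt (Y ω, W ω)
          - g₀ (Y ω, W ω) * (G (Y ω, W ω) / g (Y ω, W ω)) + G (Y ω, W ω)) ∂P := by
        have h2 : ∫ ω, ((g₀ (Y ω, W ω) / g (Y ω, W ω)) * Gt (Y ω, W ω)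
              - g₀ (Y ω, W ω) * (G (Y ω, W ω) / g (Y ω, W ω)) + G (Y ω, W ω)) ∂P
            = (∫ ω, ((g₀ (Y ω, W ω) / g (Y ω, W ω)) * Gt (Y ω, W ω)
                - g₀ (Y ω, W ω) * (G (Y ω, W ω) / g (Y ω, W ω))) ∂P)
              + ∫ ω, G (Y ω, W ω) ∂P := integral_add (i4.sub i5) ic
        have h1 : ∫ ω, ((g₀ (Y ω, W ω) / g (Y ω, W ω)) * Gt (Y ω, W ω)
              - g₀ (Y ω, W ω) * (G (Y ω, W ω) / g (Y ω, W ω))) ∂P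
            = (∫ ω, (g₀ (Y ω, W ω) / g (Y ω, W ω)) * Gt (Y ω, W ω) ∂P)
              - ∫ ω, g₀ (Y ω, W ω) * (G (Y ω, W ω) / g (Y ω, W ω)) ∂P := integral_sub i4 i5
        rw [h2, h1]
    _ = ∫ ω, (Gt (Y ω, W ω)
          + ((g₀ (Y ω, W ω) - g (Y ω, W ω)) / g (Y ω, W ω))
            * (Gt (Y ω, W ω) - G (Y ω, W ω))) ∂P := by
        refine integral_congr_ae (Filter.Eventually.of_forall fun ω => ?_)
        have hne : g (Y ω, W ω) ≠ 0 := ne_of_gt (hgpos _)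
        field_simp
        ring
    _ = (∫ ω, Gt (Y ω, W ω) ∂P)
          + ∫ ω, ((g₀ (Y ω, W ω) - g (Y ω, W ω)) / g (Y ω, W ω))
              * (Gt (Y ω, W ω) - G (Y ω, W ω)) ∂P := integral_add iGt irem
    _ = (∫ ω, DF (W ω, A ω, Y ω) ∂P)
          + ∫ ω, ((g₀ (Y ω, W ω) - g (Y ω, W ω)) / g (Y ω, W ω))
              * (Gt (Y ω, W ω) - G (Y ω, W ω)) ∂P := by rw [hstep4]
end

section
/- Multiple robustness, case (ii) with correct outcome regression: if the sampling mechanism g₀ and the outcome regression Q̄₀ are correct, then for every measurable H' : ℝ × 𝒲 → ℝ with H'(A, W) bounded (an arbitrary, possibly incorrect density-ratio weight) and every bounded measurable G : ℝ × 𝒲 → ℝ (an arbitrary, possibly incorrect conditional influence-function regression), E[(C / g₀(Y, W)) · (H'(A, W)(Y − Q̄₀(A, W)) + Q̄₀(A + δ(W), W) − ψ₀) − (C / g₀(Y, W) − 1) G(Y, W)] = 0. -/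
open MeasureTheory ProbabilityTheory
open scoped ENNReal NNReal

/-- A bounded a.e.-strongly-measurable function on a finite measure space is integrable. -/
lemma bdd_integrable_aux {Ω : Type*} [MeasurableSpace Ω] (P : Measure Ω) [IsFiniteMeasure P]
    {f : Ω → ℝ} (hf : AEStronglyMeasurable f P) {M : ℝ} (h : ∀ ω, |f ω| ≤ M) :
    Integrable f P :=
  Integrable.mono' (integrable_const M) hf
    (Filter.Eventually.of_forall fun ω => by simpa [Real.norm_eq_abs] using h ω)

/-- Pull-out property at the level of integrals: multiplying by a bounded `m`-measurable
factor commutes with taking conditional expectation inside the integral. -/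
lemma integral_mul_condexp_aux {Ω : Type*} {m0 : MeasurableSpace Ω} (P : Measure Ω)
    [IsFiniteMeasure P] {m : MeasurableSpace Ω} (hm : m ≤ m0)
    {k X : Ω → ℝ} (hk : StronglyMeasurable[m] k) {M : ℝ} (hkM : ∀ ω, |k ω| ≤ M)
    (hX : Integrable X P) :
    ∫ ω, k ω * X ω ∂P = ∫ ω, k ω * (P[X|m]) ω ∂P := by
  have hkX : Integrable (fun ω => k ω * X ω) P :=
    hX.bdd_mul (hk.mono hm).aestronglyMeasurable
      (c := M) (Filter.Eventually.of_forall fun ω => by simpa [Real.norm_eq_abs] using hkM ω)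
  have h := condExp_mul_of_stronglyMeasurable_left hk hkX hX
  have h0 : ∫ ω, (P[(fun ω => k ω * X ω)|m]) ω ∂P = ∫ ω, k ω * X ω ∂P := integral_condExp hm
  rw [← h0]
  exact integral_congr_ae h

/-- Multiple robustness, case (ii) with correct outcome regression: if the sampling
mechanism `g₀` and the outcome regression `Q̄₀` are correct, the observed-data EIF
has mean zero for arbitrary density-ratio weight `H'` and arbitrary conditional
influence-function regression `G`. -/
theorem multiple_robustness_case_ii_outcome
    {Ω 𝒲 : Type*} [MeasurableSpace Ω] [StandardBorelSpace Ω] [Nonempty Ω]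
    [MeasurableSpace 𝒲]
    (P : Measure Ω) [IsProbabilityMeasure P]
    (W : Ω → 𝒲) (hW : Measurable W)
    (A : Ω → ℝ) (hA : Measurable A)
    (Y : Ω → ℝ) (hY : Measurable Y) (hY_bd : ∃ M : ℝ, ∀ ω, |Y ω| ≤ M)
    (Qbar₀ : ℝ × 𝒲 → ℝ) (hQbar₀_meas : Measurable Qbar₀)
    (hQbar₀_bd : ∃ M : ℝ, ∀ x, |Qbar₀ x| ≤ M)
    (hQbar₀_condexp :
      P[Y | MeasurableSpace.comap (fun ω => (A ω, W ω)) inferInstance]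
        =ᵐ[P] fun ω => Qbar₀ (A ω, W ω))
    (δ : 𝒲 → ℝ) (hδ : Measurable δ)
    (ψ₀ : ℝ) (hψ₀ : ψ₀ = ∫ ω, Qbar₀ (A ω + δ (W ω), W ω) ∂P)
    (C : Ω → ℝ) (hC : Measurable C) (hC01 : ∀ ω, C ω = 0 ∨ C ω = 1)
    (g₀ : ℝ × 𝒲 → ℝ) (hg₀_meas : Measurable g₀)
    (ε : ℝ) (hε : 0 < ε) (hg₀_bd : ∀ x, ε ≤ g₀ x ∧ g₀ x ≤ 1)
    (hg₀_condexp :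
      P[C | MeasurableSpace.comap (fun ω => (Y ω, W ω)) inferInstance]
        =ᵐ[P] fun ω => g₀ (Y ω, W ω))
    (hCAR : CondIndepFun
      (MeasurableSpace.comap (fun ω => (Y ω, W ω)) inferInstance)
      ((hY.prodMk hW).comap_le) C A P)
    (H' : ℝ × 𝒲 → ℝ) (hH'_meas : Measurable H')
    (hH'_bd : ∃ M : ℝ, ∀ ω, |H' (A ω, W ω)| ≤ M)
    (G : ℝ × 𝒲 → ℝ) (hG_meas : Measurable G) (hG_bd : ∃ M : ℝ, ∀ x, |G x| ≤ M) :
    ∫ ω, ((C ω / g₀ (Y ω, W ω))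
          * (H' (A ω, W ω) * (Y ω - Qbar₀ (A ω, W ω))
            + Qbar₀ (A ω + δ (W ω), W ω) - ψ₀)
        - (C ω / g₀ (Y ω, W ω) - 1) * G (Y ω, W ω)) ∂P = 0 := by
  classical
  obtain ⟨MY, hMY⟩ := hY_bd
  obtain ⟨MQ, hMQ⟩ := hQbar₀_bd
  obtain ⟨MH, hMH⟩ := hH'_bd
  obtain ⟨MG, hMG⟩ := hG_bd
  have hC0 : ∀ ω, 0 ≤ C ω := fun ω => by rcases hC01 ω with h | h <;> rw [h] <;> norm_num
  have hC1 : ∀ ω, |C ω| ≤ 1 := fun ω => by rcases hC01 ω with h | h <;> rw [h] <;> norm_num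
  have hCle1 : ∀ ω, C ω ≤ 1 := fun ω => (le_abs_self _).trans (hC1 ω)
  have hg0pos : ∀ x, 0 < g₀ x := fun x => lt_of_lt_of_le hε (hg₀_bd x).1
  have hgne : ∀ x : ℝ × 𝒲, g₀ x ≠ 0 := fun x => (hg0pos x).ne'
  have hpairYW : Measurable fun ω => (Y ω, W ω) := hY.prodMk hW
  have hpairAW : Measurable fun ω => (A ω, W ω) := hA.prodMk hW
  have hT : Measurable fun ω => (A ω, (Y ω, W ω)) := hA.prodMk hpairYW
  have hm : MeasurableSpace.comap (fun ω => (Y ω, W ω)) inferInstance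
      ≤ (inferInstance : MeasurableSpace Ω) := hpairYW.comap_le
  have hpm : Measurable[MeasurableSpace.comap (fun ω => (Y ω, W ω)) inferInstance]
      (fun ω => (Y ω, W ω)) := measurable_iff_comap_le.mpr le_rfl
  have hpm2 : Measurable[MeasurableSpace.comap (fun ω => (A ω, W ω)) inferInstance]
      (fun ω => (A ω, W ω)) := measurable_iff_comap_le.mpr le_rfl
  -- the key "rectangle" identity, via conditional independence
  have star : ∀ (t : Set ℝ) (s : Set (ℝ × 𝒲)), MeasurableSet t → MeasurableSet s →
      ∫ ω, Set.indicator s (fun _ => (1:ℝ)) (Y ω, W ω)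
          * (C ω * Set.indicator t (fun _ => (1:ℝ)) (A ω)) ∂P
      = ∫ ω, Set.indicator s (fun _ => (1:ℝ)) (Y ω, W ω)
          * (g₀ (Y ω, W ω) * Set.indicator t (fun _ => (1:ℝ)) (A ω)) ∂P := by
    intro t s ht hs
    have hIs_sm : StronglyMeasurable[MeasurableSpace.comap (fun ω => (Y ω, W ω)) inferInstance]
        (fun ω => Set.indicator s (fun _ => (1:ℝ)) (Y ω, W ω)) :=
      ((measurable_const.indicator hs).comp hpm).stronglyMeasurable
    have hIs_bd : ∀ ω, |Set.indicator s (fun _ => (1:ℝ)) (Y ω, W ω)| ≤ 1 := fun ω => by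
      by_cases h : (Y ω, W ω) ∈ s <;> simp [Set.indicator_apply, h]
    have hJmeas : MeasurableSet (C ⁻¹' {1} ∩ A ⁻¹' t) :=
      (hC (measurableSet_singleton 1)).inter (hA ht)
    have hJ : ∀ ω, C ω * Set.indicator t (fun _ => (1:ℝ)) (A ω)
        = Set.indicator (C ⁻¹' {1} ∩ A ⁻¹' t) (fun _ => (1:ℝ)) ω := by
      intro ω
      rcases hC01 ω with h | h <;> by_cases h2 : A ω ∈ t <;>
        simp [Set.indicator_apply, Set.mem_preimage, h, h2]
    have hJint : Integrable (Set.indicator (C ⁻¹' {1} ∩ A ⁻¹' t) (fun _ => (1:ℝ))) P :=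
      bdd_integrable_aux P (measurable_const.indicator hJmeas).aestronglyMeasurable
        (M := 1) (fun ω => by
          by_cases h : ω ∈ C ⁻¹' {1} ∩ A ⁻¹' t <;> simp [Set.indicator_apply, h])
    have hItint : Integrable (Set.indicator (A ⁻¹' t) (fun _ => (1:ℝ))) P :=
      bdd_integrable_aux P (measurable_const.indicator (hA ht)).aestronglyMeasurable
        (M := 1) (fun ω => by by_cases h : ω ∈ A ⁻¹' t <;> simp [Set.indicator_apply, h])
    have h1 := (condIndepFun_iff_condExp_inter_preimage_eq_mul hC hA).mp hCAR {1} t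
      (measurableSet_singleton 1) ht
    have h2 : C = Set.indicator (C ⁻¹' {1}) (fun _ => (1:ℝ)) := by
      funext ω; rcases hC01 ω with h | h <;> simp [Set.indicator_apply, h]
    have hg0m : P[Set.indicator (C ⁻¹' {1}) (fun _ => (1:ℝ))
        | MeasurableSpace.comap (fun ω => (Y ω, W ω)) inferInstance]
        =ᵐ[P] fun ω => g₀ (Y ω, W ω) := by rw [← h2]; exact hg₀_condexp
    have hk2_sm : StronglyMeasurable[MeasurableSpace.comap (fun ω => (Y ω, W ω)) inferInstance]
        (fun ω => Set.indicator s (fun _ => (1:ℝ)) (Y ω, W ω) * g₀ (Y ω, W ω)) :=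
      hIs_sm.mul ((hg₀_meas.comp hpm).stronglyMeasurable)
    have hk2_bd : ∀ ω, |Set.indicator s (fun _ => (1:ℝ)) (Y ω, W ω) * g₀ (Y ω, W ω)| ≤ 1 := by
      intro ω
      rw [abs_mul]
      calc |Set.indicator s (fun _ => (1:ℝ)) (Y ω, W ω)| * |g₀ (Y ω, W ω)|
          ≤ 1 * 1 := mul_le_mul (hIs_bd ω)
            (by rw [abs_of_pos (hg0pos _)]; exact (hg₀_bd _).2) (abs_nonneg _) zero_le_one
        _ = 1 := one_mul 1
    calc ∫ ω, Set.indicator s (fun _ => (1:ℝ)) (Y ω, W ω)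
            * (C ω * Set.indicator t (fun _ => (1:ℝ)) (A ω)) ∂P
        = ∫ ω, Set.indicator s (fun _ => (1:ℝ)) (Y ω, W ω)
            * Set.indicator (C ⁻¹' {1} ∩ A ⁻¹' t) (fun _ => (1:ℝ)) ω ∂P := by
          refine integral_congr_ae (Filter.Eventually.of_forall fun ω => ?_)
          dsimp only
          rw [hJ ω]
      _ = ∫ ω, Set.indicator s (fun _ => (1:ℝ)) (Y ω, W ω)
            * (P[Set.indicator (C ⁻¹' {1} ∩ A ⁻¹' t) (fun _ => (1:ℝ))
                | MeasurableSpace.comap (fun ω => (Y ω, W ω)) inferInstance]) ω ∂P :=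
          integral_mul_condexp_aux P hm hIs_sm hIs_bd hJint
      _ = ∫ ω, (Set.indicator s (fun _ => (1:ℝ)) (Y ω, W ω) * g₀ (Y ω, W ω))
            * (P[Set.indicator (A ⁻¹' t) (fun _ => (1:ℝ))
                | MeasurableSpace.comap (fun ω => (Y ω, W ω)) inferInstance]) ω ∂P := by
          refine integral_congr_ae ?_
          filter_upwards [h1, hg0m] with ω hω1 hω2
          rw [hω1, hω2]
          ring
      _ = ∫ ω, (Set.indicator s (fun _ => (1:ℝ)) (Y ω, W ω) * g₀ (Y ω, W ω))
            * Set.indicator (A ⁻¹' t) (fun _ => (1:ℝ)) ω ∂P :=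
          (integral_mul_condexp_aux P hm hk2_sm hk2_bd hItint).symm
      _ = ∫ ω, Set.indicator s (fun _ => (1:ℝ)) (Y ω, W ω)
            * (g₀ (Y ω, W ω) * Set.indicator t (fun _ => (1:ℝ)) (A ω)) ∂P := by
          refine integral_congr_ae (Filter.Eventually.of_forall fun ω => ?_)
          dsimp only
          have : Set.indicator (A ⁻¹' t) (fun _ => (1:ℝ)) ω
              = Set.indicator t (fun _ => (1:ℝ)) (A ω) := by
            by_cases h : A ω ∈ t <;> simp [Set.indicator_apply, h]
          rw [this]; ring
  -- transfer to pushforward measures with densities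
  have hcompute : ∀ (D : Ω → ℝ), Measurable D → (∀ ω, 0 ≤ D ω) → (∀ ω, D ω ≤ 1) →
      ∀ (t : Set ℝ) (s : Set (ℝ × 𝒲)), MeasurableSet t → MeasurableSet s →
      Measure.map (fun ω => (A ω, (Y ω, W ω)))
        (P.withDensity fun ω => ((D ω).toNNReal : ℝ≥0∞)) (t ×ˢ s)
      = ENNReal.ofReal (∫ ω, Set.indicator s (fun _ => (1:ℝ)) (Y ω, W ω)
          * (D ω * Set.indicator t (fun _ => (1:ℝ)) (A ω)) ∂P) := by
    intro D hDm hD0 hD1 t s ht hs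
    have hE : MeasurableSet (A ⁻¹' t ∩ (fun ω => (Y ω, W ω)) ⁻¹' s) :=
      (hA ht).inter (hpairYW hs)
    have hpre : (fun ω => (A ω, (Y ω, W ω))) ⁻¹' (t ×ˢ s)
        = A ⁻¹' t ∩ (fun ω => (Y ω, W ω)) ⁻¹' s := Set.mk_preimage_prod _ _
    rw [Measure.map_apply hT (ht.prod hs), hpre, withDensity_apply _ hE]
    have hDint : Integrable D (P.restrict (A ⁻¹' t ∩ (fun ω => (Y ω, W ω)) ⁻¹' s)) :=
      (bdd_integrable_aux P hDm.aestronglyMeasurable (M := 1)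
        (fun ω => abs_le.mpr ⟨by linarith [hD0 ω], hD1 ω⟩)).restrict
    have h1 : ∫⁻ ω in A ⁻¹' t ∩ (fun ω => (Y ω, W ω)) ⁻¹' s, ((D ω).toNNReal : ℝ≥0∞) ∂P
        = ENNReal.ofReal (∫ ω in A ⁻¹' t ∩ (fun ω => (Y ω, W ω)) ⁻¹' s, D ω ∂P) :=
      (ofReal_integral_eq_lintegral_ofReal hDint
        (Filter.Eventually.of_forall hD0)).symm
    rw [h1]
    congr 1
    rw [← integral_indicator hE]
    refine integral_congr_ae (Filter.Eventually.of_forall fun ω => ?_)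
    by_cases h1' : A ω ∈ t <;> by_cases h2' : (Y ω, W ω) ∈ s <;>
      simp [Set.indicator_apply, h1', h2', Set.mem_preimage]
  -- the two pushforward measures agree
  have hνeq : Measure.map (fun ω => (A ω, (Y ω, W ω)))
        (P.withDensity fun ω => ((C ω).toNNReal : ℝ≥0∞))
      = Measure.map (fun ω => (A ω, (Y ω, W ω)))
        (P.withDensity fun ω => ((g₀ (Y ω, W ω)).toNNReal : ℝ≥0∞)) := by
    have hrect : ∀ (t : Set ℝ) (s : Set (ℝ × 𝒲)), MeasurableSet t → MeasurableSet s →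
        Measure.map (fun ω => (A ω, (Y ω, W ω)))
          (P.withDensity fun ω => ((C ω).toNNReal : ℝ≥0∞)) (t ×ˢ s)
        = Measure.map (fun ω => (A ω, (Y ω, W ω)))
          (P.withDensity fun ω => ((g₀ (Y ω, W ω)).toNNReal : ℝ≥0∞)) (t ×ˢ s) := by
      intro t s ht hs
      rw [hcompute C hC hC0 hCle1 t s ht hs,
        hcompute (fun ω => g₀ (Y ω, W ω)) (hg₀_meas.comp hpairYW) (fun ω => (hg0pos _).le)
          (fun ω => (hg₀_bd _).2) t s ht hs, star t s ht hs]
    haveI : IsFiniteMeasure (Measure.map (fun ω => (A ω, (Y ω, W ω)))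
        (P.withDensity fun ω => ((C ω).toNNReal : ℝ≥0∞))) := by
      constructor
      rw [← Set.univ_prod_univ, hcompute C hC hC0 hCle1 _ _ MeasurableSet.univ
        MeasurableSet.univ]
      exact ENNReal.ofReal_lt_top
    refine ext_of_generate_finite _ generateFrom_prod.symm isPiSystem_prod ?_ ?_
    · rintro u ⟨t, ht, s, hs, rfl⟩
      exact hrect t s ht hs
    · rw [← Set.univ_prod_univ]
      exact hrect _ _ MeasurableSet.univ MeasurableSet.univ
  -- key reweighting identity
  have key : ∀ F : ℝ × (ℝ × 𝒲) → ℝ, Measurable F →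
      ∫ ω, C ω * F (A ω, (Y ω, W ω)) ∂P
        = ∫ ω, g₀ (Y ω, W ω) * F (A ω, (Y ω, W ω)) ∂P := by
    intro F hF
    have hD : ∀ (D : Ω → ℝ), Measurable D → (∀ ω, 0 ≤ D ω) →
        ∫ ω, D ω * F (A ω, (Y ω, W ω)) ∂P
          = ∫ x, F x ∂(Measure.map (fun ω => (A ω, (Y ω, W ω)))
              (P.withDensity fun ω => ((D ω).toNNReal : ℝ≥0∞))) := by
      intro D hDm hD0
      rw [integral_map hT.aemeasurable hF.aestronglyMeasurable,
        integral_withDensity_eq_integral_smul hDm.real_toNNReal]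
      refine integral_congr_ae (Filter.Eventually.of_forall fun ω => ?_)
      simp [NNReal.smul_def, Real.coe_toNNReal _ (hD0 ω)]
    rw [hD C hC hC0, hD (fun ω => g₀ (Y ω, W ω)) (hg₀_meas.comp hpairYW) (fun ω => (hg0pos _).le), hνeq]
  -- the two correction functions
  set F₁ : ℝ × (ℝ × 𝒲) → ℝ := fun p =>
    (H' (p.1, p.2.2) * (p.2.1 - Qbar₀ (p.1, p.2.2))
      + Qbar₀ (p.1 + δ p.2.2, p.2.2) - ψ₀) / g₀ p.2 with hF₁def
  set F₂ : ℝ × (ℝ × 𝒲) → ℝ := fun p => G p.2 / g₀ p.2 with hF₂def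
  have hprfst : Measurable fun p : ℝ × (ℝ × 𝒲) => (p.1, p.2.2) :=
    measurable_fst.prodMk (measurable_snd.comp measurable_snd)
  have hF₁m : Measurable F₁ := by
    refine Measurable.div ?_ (hg₀_meas.comp measurable_snd)
    refine Measurable.sub (Measurable.add ?_ ?_) measurable_const
    · exact (hH'_meas.comp hprfst).mul
        ((measurable_fst.comp measurable_snd).sub (hQbar₀_meas.comp hprfst))
    · exact hQbar₀_meas.comp ((measurable_fst.add
        (hδ.comp (measurable_snd.comp measurable_snd))).prodMk
        (measurable_snd.comp measurable_snd))
  have hF₂m : Measurable F₂ :=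
    (hG_meas.comp measurable_snd).div (hg₀_meas.comp measurable_snd)
  -- bounds
  have hnum : ∀ ω, |H' (A ω, W ω) * (Y ω - Qbar₀ (A ω, W ω))
      + Qbar₀ (A ω + δ (W ω), W ω) - ψ₀| ≤ MH * (MY + MQ) + MQ + |ψ₀| := by
    intro ω
    have h2 : |Y ω - Qbar₀ (A ω, W ω)| ≤ MY + MQ :=
      (abs_sub _ _).trans (add_le_add (hMY ω) (hMQ _))
    have h1 : |H' (A ω, W ω) * (Y ω - Qbar₀ (A ω, W ω))| ≤ MH * (MY + MQ) := by
      rw [abs_mul]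
      exact mul_le_mul (hMH ω) h2 (abs_nonneg _) ((abs_nonneg _).trans (hMH ω))
    calc |H' (A ω, W ω) * (Y ω - Qbar₀ (A ω, W ω)) + Qbar₀ (A ω + δ (W ω), W ω) - ψ₀|
        ≤ |H' (A ω, W ω) * (Y ω - Qbar₀ (A ω, W ω)) + Qbar₀ (A ω + δ (W ω), W ω)| + |ψ₀| :=
          abs_sub _ _
      _ ≤ (|H' (A ω, W ω) * (Y ω - Qbar₀ (A ω, W ω))| + |Qbar₀ (A ω + δ (W ω), W ω)|) + |ψ₀| :=
          add_le_add (abs_add_le _ _) le_rfl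
      _ ≤ MH * (MY + MQ) + MQ + |ψ₀| := by
          have := hMQ (A ω + δ (W ω), W ω); linarith
  have hB1 : ∀ ω, |F₁ (A ω, (Y ω, W ω))| ≤ (MH * (MY + MQ) + MQ + |ψ₀|) / ε := by
    intro ω
    simp only [hF₁def]
    rw [abs_div, abs_of_pos (hg0pos _)]
    exact div_le_div₀ ((abs_nonneg _).trans (hnum ω)) (hnum ω) hε (hg₀_bd _).1
  have hB2 : ∀ ω, |F₂ (A ω, (Y ω, W ω))| ≤ MG / ε := by
    intro ω
    simp only [hF₂def]
    rw [abs_div, abs_of_pos (hg0pos _)]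
    exact div_le_div₀ ((abs_nonneg _).trans (hMG (Y ω, W ω))) (hMG (Y ω, W ω)) hε (hg₀_bd (Y ω, W ω)).1
  -- integrability
  have if₁ : Integrable (fun ω => C ω * F₁ (A ω, (Y ω, W ω))) P := by
    refine bdd_integrable_aux P ((hC.mul (hF₁m.comp hT)).aestronglyMeasurable)
      (M := 1 * ((MH * (MY + MQ) + MQ + |ψ₀|) / ε)) fun ω => ?_
    rw [abs_mul]
    exact mul_le_mul (hC1 ω) (hB1 ω) (abs_nonneg _) zero_le_one
  have if₂ : Integrable (fun ω => C ω * F₂ (A ω, (Y ω, W ω))) P := by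
    refine bdd_integrable_aux P ((hC.mul (hF₂m.comp hT)).aestronglyMeasurable)
      (M := 1 * (MG / ε)) fun ω => ?_
    rw [abs_mul]
    exact mul_le_mul (hC1 ω) (hB2 ω) (abs_nonneg _) zero_le_one
  have if₃ : Integrable (fun ω => G (Y ω, W ω)) P :=
    bdd_integrable_aux P (hG_meas.comp hpairYW).aestronglyMeasurable
      (M := MG) fun ω => hMG _
  -- pointwise decomposition of the integrand
  have hdecomp : ∀ ω, (C ω / g₀ (Y ω, W ω))
          * (H' (A ω, W ω) * (Y ω - Qbar₀ (A ω, W ω))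
            + Qbar₀ (A ω + δ (W ω), W ω) - ψ₀)
        - (C ω / g₀ (Y ω, W ω) - 1) * G (Y ω, W ω)
      = C ω * F₁ (A ω, (Y ω, W ω)) - C ω * F₂ (A ω, (Y ω, W ω)) + G (Y ω, W ω) := by
    intro ω
    simp only [hF₁def, hF₂def]
    field_simp
    ring
  rw [integral_congr_ae (Filter.Eventually.of_forall hdecomp)]
  have isub : Integrable
      (fun ω => C ω * F₁ (A ω, (Y ω, W ω)) - C ω * F₂ (A ω, (Y ω, W ω))) P := if₁.sub if₂
  rw [integral_add isub if₃, integral_sub if₁ if₂, key F₁ hF₁m, key F₂ hF₂m]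
  have e₁ : ∫ ω, g₀ (Y ω, W ω) * F₁ (A ω, (Y ω, W ω)) ∂P
      = ∫ ω, (H' (A ω, W ω) * (Y ω - Qbar₀ (A ω, W ω))
          + Qbar₀ (A ω + δ (W ω), W ω) - ψ₀) ∂P := by
    refine integral_congr_ae (Filter.Eventually.of_forall fun ω => ?_)
    simp only [hF₁def]
    rw [mul_comm, div_mul_cancel₀ _ (hgne (Y ω, W ω))]
  have e₂ : ∫ ω, g₀ (Y ω, W ω) * F₂ (A ω, (Y ω, W ω)) ∂P = ∫ ω, G (Y ω, W ω) ∂P := by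
    refine integral_congr_ae (Filter.Eventually.of_forall fun ω => ?_)
    simp only [hF₂def]
    rw [mul_comm, div_mul_cancel₀ _ (hgne (Y ω, W ω))]
  rw [e₁, e₂]
  have iX : Integrable (fun ω => H' (A ω, W ω) * (Y ω - Qbar₀ (A ω, W ω))) P := by
    refine bdd_integrable_aux P ((hH'_meas.comp hpairAW).mul
      (hY.sub (hQbar₀_meas.comp hpairAW))).aestronglyMeasurable
      (M := MH * (MY + MQ)) fun ω => ?_
    rw [abs_mul]
    exact mul_le_mul (hMH ω) ((abs_sub _ _).trans (add_le_add (hMY ω) (hMQ _)))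
      (abs_nonneg _) ((abs_nonneg _).trans (hMH ω))
  have iQδ : Integrable (fun ω => Qbar₀ (A ω + δ (W ω), W ω)) P :=
    bdd_integrable_aux P (hQbar₀_meas.comp
      ((hA.add (hδ.comp hW)).prodMk hW)).aestronglyMeasurable (M := MQ) fun ω => hMQ _
  have iadd : Integrable (fun ω => H' (A ω, W ω) * (Y ω - Qbar₀ (A ω, W ω))
      + Qbar₀ (A ω + δ (W ω), W ω)) P := iX.add iQδ
  rw [integral_sub iadd (integrable_const ψ₀), integral_add iX iQδ, integral_const]
  -- the remaining term vanishes by the tower property with the correct outcome regression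
  have hT1 : ∫ ω, H' (A ω, W ω) * (Y ω - Qbar₀ (A ω, W ω)) ∂P = 0 := by
    have hm₂ : MeasurableSpace.comap (fun ω => (A ω, W ω)) inferInstance
        ≤ (inferInstance : MeasurableSpace Ω) := hpairAW.comap_le
    have hsm : StronglyMeasurable[MeasurableSpace.comap (fun ω => (A ω, W ω)) inferInstance]
        (fun ω => H' (A ω, W ω)) := (hH'_meas.comp hpm2).stronglyMeasurable
    have hYint : Integrable Y P := bdd_integrable_aux P hY.aestronglyMeasurable hMY
    have hQint : Integrable (fun ω => Qbar₀ (A ω, W ω)) P :=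
      bdd_integrable_aux P (hQbar₀_meas.comp hpairAW).aestronglyMeasurable
        (M := MQ) fun ω => hMQ _
    have hXint : Integrable (fun ω => Y ω - Qbar₀ (A ω, W ω)) P := hYint.sub hQint
    rw [integral_mul_condexp_aux P hm₂ hsm hMH hXint]
    refine integral_eq_zero_of_ae ?_
    have hc : P[(fun ω => Y ω - Qbar₀ (A ω, W ω))
        | MeasurableSpace.comap (fun ω => (A ω, W ω)) inferInstance]
        =ᵐ[P] P[Y | MeasurableSpace.comap (fun ω => (A ω, W ω)) inferInstance]
          - P[(fun ω => Qbar₀ (A ω, W ω))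
            | MeasurableSpace.comap (fun ω => (A ω, W ω)) inferInstance] :=
      condExp_sub hYint hQint _
    have hcq : P[(fun ω => Qbar₀ (A ω, W ω))
        | MeasurableSpace.comap (fun ω => (A ω, W ω)) inferInstance]
        = fun ω => Qbar₀ (A ω, W ω) :=
      condExp_of_stronglyMeasurable hm₂
        ((hQbar₀_meas.comp hpm2).stronglyMeasurable) hQint
    filter_upwards [hc, hQbar₀_condexp] with ω h1 h2
    rw [Pi.zero_apply, h1, Pi.sub_apply, h2, hcq]
    simp
  rw [hT1, ← hψ₀]
  simp [measure_univ]
end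

section
/- Multiple robustness, case (i) with correct outcome regression: let H' : ℝ × 𝒲 → ℝ be measurable with H'(A, W) bounded (an arbitrary density-ratio weight), define D(w, a, y) := H'(a, w)(y − Q̄₀(a, w)) + Q̄₀(a + δ(w), w) − ψ₀, and let G : ℝ × 𝒲 → ℝ be a bounded measurable function satisfying G(Y, W) = E[D(W, A, Y) ∣ σ(Y, W)] a.s. (the correctly specified conditional influence-function regression). Then for every measurable g : ℝ × 𝒲 → ℝ with ε' ≤ g ≤ 1 for some ε' > 0 (an arbitrary, possibly incorrect sampling mechanism), E[(C / g(Y, W)) D(W, A, Y) − (C / g(Y, W) − 1) G(Y, W)] = 0. -/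
open MeasureTheory ProbabilityTheory

section Helpers

variable {Ω : Type*} [mΩ : MeasurableSpace Ω] {μ : Measure Ω}

lemma my_integrable_of_abs_le [IsFiniteMeasure μ] {f : Ω → ℝ}
    (hf : AEStronglyMeasurable f μ) {M : ℝ} (h : ∀ ω, |f ω| ≤ M) :
    Integrable f μ :=
  (integrable_const M).mono' hf (Filter.Eventually.of_forall fun ω => by
    simpa [Real.norm_eq_abs] using h ω)

lemma my_abs_mul_le {a b Ma Mb : ℝ} (ha : |a| ≤ Ma) (hb : |b| ≤ Mb) : |a * b| ≤ Ma * Mb := by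
  rw [abs_mul]
  exact mul_le_mul ha hb (abs_nonneg _) ((abs_nonneg a).trans ha)

lemma my_abs_sub (a b : ℝ) : |a - b| ≤ |a| + |b| := by
  rw [sub_eq_add_neg]
  exact (abs_add_le a (-b)).trans (by rw [abs_neg])

lemma my_integral_mul_condexp_right [IsFiniteMeasure μ] {m : MeasurableSpace Ω} (hm : m ≤ mΩ)
    {h k : Ω → ℝ} (hh : StronglyMeasurable[m] h)
    (hhk : Integrable (fun ω => h ω * k ω) μ) (hk : Integrable k μ) :
    ∫ ω, h ω * k ω ∂μ = ∫ ω, h ω * (μ[k|m]) ω ∂μ := by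
  have h1 : μ[fun ω => h ω * k ω|m] =ᵐ[μ] fun ω => h ω * (μ[k|m]) ω := by
    simpa [Pi.mul_def] using condExp_mul_of_stronglyMeasurable_left hh hhk hk
  rw [← integral_condExp hm (f := fun ω => h ω * k ω)]
  exact integral_congr_ae h1

end Helpers

/-- If `C ⊥ A | m'` and `C` is `{0,1}`-valued, then conditioning on the larger σ-algebra
`m' ⊔ σ(A)` gives the same conditional expectation of `C` as conditioning on `m'`. -/
lemma my_condexp_sup_comap_of_condIndepFun {Ω : Type*} {m' : MeasurableSpace Ω}
    [mΩ : MeasurableSpace Ω] [StandardBorelSpace Ω] {μ : Measure Ω}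
    (hm' : m' ≤ mΩ) [IsProbabilityMeasure μ]
    {C A : Ω → ℝ} (hC : Measurable C) (hA : Measurable A)
    (hC01 : ∀ ω, C ω = 0 ∨ C ω = 1)
    (hCI : CondIndepFun m' hm' C A μ) :
    μ[C | m' ⊔ MeasurableSpace.comap A inferInstance] =ᵐ[μ] μ[C | m'] := by
  classical
  have hm'' : m' ⊔ MeasurableSpace.comap A inferInstance ≤ mΩ := sup_le hm' hA.comap_le
  have hCbd : ∀ ω, |C ω| ≤ 1 := fun ω => by rcases hC01 ω with h | h <;> simp [h]
  have hCint : Integrable C μ := my_integrable_of_abs_le hC.aestronglyMeasurable hCbd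
  set E : Set Ω := C ⁻¹' {1} with hE_def
  have hE : MeasurableSet E := hC (measurableSet_singleton 1)
  have hCone : ∀ ω, ω ∈ E → C ω = 1 := fun ω h => h
  have hCzero : ∀ ω, ω ∉ E → C ω = 0 := by
    intro ω h
    rcases hC01 ω with h0 | h1
    · exact h0
    · exact absurd h1 h
  have hCval : ∀ ω, C ω = E.indicator (fun _ => (1 : ℝ)) ω := by
    intro ω
    by_cases hω : ω ∈ E
    · simp [Set.indicator_of_mem hω, hCone ω hω]
    · simp [Set.indicator_of_notMem hω, hCzero ω hω]
  have hfac : ∀ t : Set ℝ, MeasurableSet t →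
      μ[(E ∩ A ⁻¹' t).indicator (fun _ => (1 : ℝ)) | m'] =ᵐ[μ]
        fun ω => (μ[E.indicator (fun _ => (1 : ℝ)) | m']) ω *
          (μ[(A ⁻¹' t).indicator (fun _ => (1 : ℝ)) | m']) ω := by
    intro t ht
    have := (condIndepFun_iff_condExp_inter_preimage_eq_mul (hm' := hm') hC hA).mp hCI {1} t
      (measurableSet_singleton 1) ht
    simpa using this
  have hind_int : ∀ s : Set Ω, MeasurableSet s →
      Integrable (s.indicator (fun _ => (1 : ℝ))) μ :=
    fun s hs => (integrable_const 1).indicator hs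
  set π : Set (Set Ω) :=
    {s | ∃ s₁, MeasurableSet[m'] s₁ ∧ ∃ t : Set ℝ, MeasurableSet t ∧ s = s₁ ∩ A ⁻¹' t}
    with hπ_def
  have hgen : m' ⊔ MeasurableSpace.comap A inferInstance = MeasurableSpace.generateFrom π := by
    refine le_antisymm (sup_le ?_ ?_) (MeasurableSpace.generateFrom_le ?_)
    · intro s hs
      exact MeasurableSpace.measurableSet_generateFrom
        ⟨s, hs, Set.univ, MeasurableSet.univ, by simp⟩
    · rintro s ⟨t, ht, rfl⟩
      exact MeasurableSpace.measurableSet_generateFrom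
        ⟨Set.univ, MeasurableSet.univ, t, ht, by simp⟩
    · rintro s ⟨s₁, hs₁, t, ht, rfl⟩
      exact MeasurableSet.inter ((le_sup_left : m' ≤ m' ⊔ MeasurableSpace.comap A inferInstance) _ hs₁)
        ((le_sup_right : MeasurableSpace.comap A inferInstance ≤ m' ⊔ MeasurableSpace.comap A inferInstance) _ ⟨t, ht, rfl⟩)
  have hπ : IsPiSystem π := by
    rintro s ⟨s₁, hs₁, t, ht, rfl⟩ u ⟨u₁, hu₁, v, hv, rfl⟩ -
    refine ⟨s₁ ∩ u₁, hs₁.inter hu₁, t ∩ v, ht.inter hv, ?_⟩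
    ext ω
    simp only [Set.mem_inter_iff, Set.mem_preimage]
    tauto
  have key : ∀ s : Set Ω, MeasurableSet[m' ⊔ MeasurableSpace.comap A inferInstance] s →
      ∫ x in s, (μ[C|m']) x ∂μ = ∫ x in s, C x ∂μ := by
    intro s hs
    refine MeasurableSpace.induction_on_inter (m := m' ⊔ MeasurableSpace.comap A inferInstance)
      (C := fun s _ => ∫ x in s, (μ[C|m']) x ∂μ = ∫ x in s, C x ∂μ) hgen hπ (by simp)
      ?_ ?_ ?_ s hs
    · -- basic case
      rintro u ⟨s₁, hs₁, t, ht, rfl⟩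
      have hAt : MeasurableSet (A ⁻¹' t) := hA ht
      have hI1 : Integrable ((A ⁻¹' t).indicator (fun _ => (1 : ℝ))) μ := hind_int _ hAt
      have hIEt : Integrable ((E ∩ A ⁻¹' t).indicator (fun _ => (1 : ℝ))) μ :=
        hind_int _ (hE.inter hAt)
      have hI1bd : ∀ ω, |(A ⁻¹' t).indicator (fun _ => (1 : ℝ)) ω| ≤ 1 := fun ω => by
        by_cases h : ω ∈ A ⁻¹' t <;> simp [Set.indicator_apply, h]
      have hrhs : ∫ x in s₁ ∩ A ⁻¹' t, C x ∂μ
          = ∫ x in s₁, (μ[E.indicator (fun _ => (1 : ℝ))|m']) x *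
              (μ[(A ⁻¹' t).indicator (fun _ => (1 : ℝ))|m']) x ∂μ := by
        rw [← setIntegral_indicator hAt]
        have h1 : ∀ x, (A ⁻¹' t).indicator C x
            = (E ∩ A ⁻¹' t).indicator (fun _ => (1 : ℝ)) x := by
          intro x
          by_cases hx : x ∈ A ⁻¹' t
          · by_cases hxE : x ∈ E
            · simp [Set.indicator_apply, hx, hxE, hCone x hxE]
            · simp [Set.indicator_apply, hx, hxE, hCzero x hxE]
          · simp [Set.indicator_apply, hx]
        simp only [h1]
        rw [← setIntegral_condExp hm' hIEt hs₁]
        exact setIntegral_congr_ae (hm' s₁ hs₁) ((hfac t ht).mono fun x hx _ => hx)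
      have hlhs : ∫ x in s₁ ∩ A ⁻¹' t, (μ[C|m']) x ∂μ
          = ∫ x in s₁, (μ[E.indicator (fun _ => (1 : ℝ))|m']) x *
              (μ[(A ⁻¹' t).indicator (fun _ => (1 : ℝ))|m']) x ∂μ := by
        rw [← setIntegral_indicator hAt]
        have h2 : ∀ x, (A ⁻¹' t).indicator (μ[C|m']) x
            = (μ[C|m']) x * (A ⁻¹' t).indicator (fun _ => (1 : ℝ)) x := by
          intro x
          by_cases hx : x ∈ A ⁻¹' t <;> simp [Set.indicator_apply, hx]
        simp only [h2]
        have hmul_int : Integrable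
            (fun x => (μ[C|m']) x * (A ⁻¹' t).indicator (fun _ => (1 : ℝ)) x) μ := by
          refine Integrable.congr (Integrable.bdd_mul (c := 1) integrable_condExp
            ((measurable_one.indicator hAt).aestronglyMeasurable)
            (Filter.Eventually.of_forall fun x => by rw [Real.norm_eq_abs]; exact hI1bd x))
            (Filter.Eventually.of_forall fun x => mul_comm _ _)
        rw [← setIntegral_condExp hm' hmul_int hs₁]
        have h3 : μ[(fun x => (μ[C|m']) x * (A ⁻¹' t).indicator (fun _ => (1 : ℝ)) x)|m']
            =ᵐ[μ] fun x => (μ[C|m']) x *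
              (μ[(A ⁻¹' t).indicator (fun _ => (1 : ℝ))|m']) x := by
          simpa [Pi.mul_def] using
            condExp_mul_of_stronglyMeasurable_left stronglyMeasurable_condExp hmul_int hI1
        have h4 : μ[C|m'] =ᵐ[μ] μ[E.indicator (fun _ => (1 : ℝ))|m'] :=
          condExp_congr_ae (Filter.Eventually.of_forall hCval)
        refine setIntegral_congr_ae (hm' s₁ hs₁) ?_
        filter_upwards [h3, h4] with x h3x h4x _
        rw [h3x, h4x]
      rw [hlhs, hrhs]
    · -- complement case
      intro u hu h
      have hu0 : MeasurableSet u := hm'' u hu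
      have e1 := integral_add_compl hu0 (integrable_condExp (f := C) (m := m') (μ := μ))
      have e2 := integral_add_compl hu0 hCint
      have e3 : ∫ x, (μ[C|m']) x ∂μ = ∫ x, C x ∂μ := integral_condExp hm'
      linarith
    · -- countable disjoint union case
      intro f hdisj hmeas h
      rw [integral_iUnion (fun i => hm'' _ (hmeas i)) hdisj
          (integrable_condExp.integrableOn),
        integral_iUnion (fun i => hm'' _ (hmeas i)) hdisj hCint.integrableOn]
      exact tsum_congr h
  exact (ae_eq_condExp_of_forall_setIntegral_eq hm'' hCint
    (fun s _ _ => integrable_condExp.integrableOn)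
    (fun s hs _ => key s hs)
    (StronglyMeasurable.aestronglyMeasurable (stronglyMeasurable_condExp.mono le_sup_left))).symm

/-- Multiple robustness, case (i) with correct outcome regression: if the
conditional influence-function regression `G` is correctly specified, the
observed-data EIF has mean zero for an arbitrary sampling mechanism `g` and an
arbitrary density-ratio weight `H'` (with correct outcome regression `Q̄₀`). -/
theorem multiple_robustness_case_i_outcome
    {Ω 𝒲 : Type*} [MeasurableSpace Ω] [StandardBorelSpace Ω] [Nonempty Ω]
    [MeasurableSpace 𝒲]
    (P : Measure Ω) [IsProbabilityMeasure P]
    (W : Ω → 𝒲) (hW : Measurable W)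
    (A : Ω → ℝ) (hA : Measurable A)
    (Y : Ω → ℝ) (hY : Measurable Y) (hY_bd : ∃ M : ℝ, ∀ ω, |Y ω| ≤ M)
    (Qbar₀ : ℝ × 𝒲 → ℝ) (hQbar₀_meas : Measurable Qbar₀)
    (hQbar₀_bd : ∃ M : ℝ, ∀ x, |Qbar₀ x| ≤ M)
    (hQbar₀_condexp :
      P[Y | MeasurableSpace.comap (fun ω => (A ω, W ω)) inferInstance]
        =ᵐ[P] fun ω => Qbar₀ (A ω, W ω))
    (δ : 𝒲 → ℝ) (hδ : Measurable δ)
    (ψ₀ : ℝ) (hψ₀ : ψ₀ = ∫ ω, Qbar₀ (A ω + δ (W ω), W ω) ∂P)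
    (C : Ω → ℝ) (hC : Measurable C) (hC01 : ∀ ω, C ω = 0 ∨ C ω = 1)
    (g₀ : ℝ × 𝒲 → ℝ) (hg₀_meas : Measurable g₀)
    (ε : ℝ) (hε : 0 < ε) (hg₀_bd : ∀ x, ε ≤ g₀ x ∧ g₀ x ≤ 1)
    (hg₀_condexp :
      P[C | MeasurableSpace.comap (fun ω => (Y ω, W ω)) inferInstance]
        =ᵐ[P] fun ω => g₀ (Y ω, W ω))
    (hCAR : CondIndepFun
      (MeasurableSpace.comap (fun ω => (Y ω, W ω)) inferInstance)
      ((hY.prodMk hW).comap_le) C A P)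
    (H' : ℝ × 𝒲 → ℝ) (hH'_meas : Measurable H')
    (hH'_bd : ∃ M : ℝ, ∀ ω, |H' (A ω, W ω)| ≤ M)
    (G : ℝ × 𝒲 → ℝ) (hG_meas : Measurable G) (hG_bd : ∃ M : ℝ, ∀ x, |G x| ≤ M)
    (hG_condexp :
      P[fun ω => H' (A ω, W ω) * (Y ω - Qbar₀ (A ω, W ω))
          + Qbar₀ (A ω + δ (W ω), W ω) - ψ₀
        | MeasurableSpace.comap (fun ω => (Y ω, W ω)) inferInstance]
        =ᵐ[P] fun ω => G (Y ω, W ω))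
    (g : ℝ × 𝒲 → ℝ) (hg_meas : Measurable g)
    (ε' : ℝ) (hε' : 0 < ε') (hg_bd : ∀ x, ε' ≤ g x ∧ g x ≤ 1) :
    ∫ ω, ((C ω / g (Y ω, W ω))
          * (H' (A ω, W ω) * (Y ω - Qbar₀ (A ω, W ω))
            + Qbar₀ (A ω + δ (W ω), W ω) - ψ₀)
        - (C ω / g (Y ω, W ω) - 1) * G (Y ω, W ω)) ∂P = 0 := by
  classical
  obtain ⟨MY, hMY⟩ := hY_bd
  obtain ⟨MQ, hMQ⟩ := hQbar₀_bd
  obtain ⟨MH, hMH⟩ := hH'_bd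
  obtain ⟨MG, hMG⟩ := hG_bd
  set D : Ω → ℝ := fun ω => H' (A ω, W ω) * (Y ω - Qbar₀ (A ω, W ω))
      + Qbar₀ (A ω + δ (W ω), W ω) - ψ₀ with hD_def
  set Gf : Ω → ℝ := fun ω => G (Y ω, W ω) with hGf_def
  have hgfpos : ∀ ω, 0 < g (Y ω, W ω) := fun ω => lt_of_lt_of_le hε' (hg_bd _).1
  set k : Ω → ℝ := fun ω => (g (Y ω, W ω))⁻¹ * (D ω - Gf ω) with hk_def
  -- basic measurability
  have hAW : Measurable fun ω => (A ω, W ω) := hA.prodMk hW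
  have hYWmeas : Measurable fun ω => (Y ω, W ω) := hY.prodMk hW
  have hm' : MeasurableSpace.comap (fun ω => (Y ω, W ω)) inferInstance ≤ _ :=
    (hY.prodMk hW).comap_le
  have hm'' : MeasurableSpace.comap (fun ω => (Y ω, W ω)) inferInstance
      ⊔ MeasurableSpace.comap A inferInstance ≤ _ := sup_le hm' hA.comap_le
  have hmAW : MeasurableSpace.comap (fun ω => (A ω, W ω)) inferInstance ≤ _ := hAW.comap_le
  have hYWm' : Measurable[MeasurableSpace.comap (fun ω => (Y ω, W ω)) inferInstance]
      fun ω => (Y ω, W ω) := measurable_iff_comap_le.mpr le_rfl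
  have hAWm : Measurable[MeasurableSpace.comap (fun ω => (A ω, W ω)) inferInstance]
      fun ω => (A ω, W ω) := measurable_iff_comap_le.mpr le_rfl
  have hD_meas : Measurable D :=
    ((hH'_meas.comp hAW).mul (hY.sub (hQbar₀_meas.comp hAW))).add
      (hQbar₀_meas.comp ((hA.add (hδ.comp hW)).prodMk hW)) |>.sub measurable_const
  have hGf_meas : Measurable Gf := hG_meas.comp hYWmeas
  have hk_meas : Measurable k := ((hg_meas.comp hYWmeas).inv).mul (hD_meas.sub hGf_meas)
  -- bounds
  have hCbd : ∀ ω, |C ω| ≤ 1 := fun ω => by rcases hC01 ω with h | h <;> simp [h]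
  have hGfbd : ∀ ω, |Gf ω| ≤ MG := fun ω => hMG (Y ω, W ω)
  have hXbd : ∀ ω, |H' (A ω, W ω) * (Y ω - Qbar₀ (A ω, W ω))| ≤ MH * (MY + MQ) := fun ω =>
    my_abs_mul_le (hMH ω) ((my_abs_sub _ _).trans (add_le_add (hMY ω) (hMQ _)))
  have hDbd : ∀ ω, |D ω| ≤ MH * (MY + MQ) + MQ + |ψ₀| := by
    intro ω
    have h2 := abs_add_le (H' (A ω, W ω) * (Y ω - Qbar₀ (A ω, W ω)))
      (Qbar₀ (A ω + δ (W ω), W ω))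
    have h3 := my_abs_sub (H' (A ω, W ω) * (Y ω - Qbar₀ (A ω, W ω))
      + Qbar₀ (A ω + δ (W ω), W ω)) ψ₀
    have h4 := hMQ (A ω + δ (W ω), W ω)
    have h1 := hXbd ω
    show |H' (A ω, W ω) * (Y ω - Qbar₀ (A ω, W ω))
      + Qbar₀ (A ω + δ (W ω), W ω) - ψ₀| ≤ MH * (MY + MQ) + MQ + |ψ₀|
    linarith
  have hkbd : ∀ ω, |k ω| ≤ ε'⁻¹ * (MH * (MY + MQ) + MQ + |ψ₀| + MG) := by
    intro ω
    have hinv : |(g (Y ω, W ω))⁻¹| ≤ ε'⁻¹ := by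
      rw [abs_of_pos (inv_pos.mpr (hgfpos ω))]
      have := one_div_le_one_div_of_le hε' (hg_bd (Y ω, W ω)).1
      simpa [one_div] using this
    have hsub : |D ω - Gf ω| ≤ MH * (MY + MQ) + MQ + |ψ₀| + MG :=
      (my_abs_sub _ _).trans (by have := add_le_add (hDbd ω) (hGfbd ω); linarith)
    exact my_abs_mul_le hinv hsub
  -- integrability
  have hCint : Integrable C P := my_integrable_of_abs_le hC.aestronglyMeasurable hCbd
  have hYint : Integrable Y P := my_integrable_of_abs_le hY.aestronglyMeasurable hMY
  have hqint : Integrable (fun ω => Qbar₀ (A ω, W ω)) P :=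
    my_integrable_of_abs_le (hQbar₀_meas.comp hAW).aestronglyMeasurable fun ω => hMQ _
  have hq'int : Integrable (fun ω => Qbar₀ (A ω + δ (W ω), W ω)) P :=
    my_integrable_of_abs_le
      (hQbar₀_meas.comp ((hA.add (hδ.comp hW)).prodMk hW)).aestronglyMeasurable fun ω => hMQ _
  have hXint : Integrable (fun ω => H' (A ω, W ω) * (Y ω - Qbar₀ (A ω, W ω))) P :=
    my_integrable_of_abs_le
      ((hH'_meas.comp hAW).mul (hY.sub (hQbar₀_meas.comp hAW))).aestronglyMeasurable hXbd
  have hDint : Integrable D P := my_integrable_of_abs_le hD_meas.aestronglyMeasurable hDbd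
  have hGfint : Integrable Gf P := my_integrable_of_abs_le hGf_meas.aestronglyMeasurable hGfbd
  have hkint : Integrable k P := my_integrable_of_abs_le hk_meas.aestronglyMeasurable hkbd
  have hCk_int : Integrable (fun ω => C ω * k ω) P :=
    my_integrable_of_abs_le (hC.mul hk_meas).aestronglyMeasurable
      fun ω => my_abs_mul_le (hCbd ω) (hkbd ω)
  have hkC_int : Integrable (fun ω => k ω * C ω) P :=
    my_integrable_of_abs_le (hk_meas.mul hC).aestronglyMeasurable
      fun ω => my_abs_mul_le (hkbd ω) (hCbd ω)
  -- Part A : `∫ Gf = ∫ D = 0`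
  have hGf_eq : ∫ ω, Gf ω ∂P = ∫ ω, D ω ∂P := by
    have h1 : ∫ ω, Gf ω ∂P
        = ∫ ω, (P[D | MeasurableSpace.comap (fun ω => (Y ω, W ω)) inferInstance]) ω ∂P :=
      (integral_congr_ae hG_condexp).symm
    rw [h1, integral_condExp hm']
  have hX0 : ∫ ω, H' (A ω, W ω) * (Y ω - Qbar₀ (A ω, W ω)) ∂P = 0 := by
    have hh : StronglyMeasurable[MeasurableSpace.comap (fun ω => (A ω, W ω)) inferInstance]
        fun ω => H' (A ω, W ω) := (hH'_meas.comp hAWm).stronglyMeasurable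
    have hstep := my_integral_mul_condexp_right hmAW hh
      (h := fun ω => H' (A ω, W ω)) (k := fun ω => Y ω - Qbar₀ (A ω, W ω))
      hXint (hYint.sub hqint)
    rw [hstep]
    have hqfix : P[(fun ω => Qbar₀ (A ω, W ω))
          | MeasurableSpace.comap (fun ω => (A ω, W ω)) inferInstance]
        = fun ω => Qbar₀ (A ω, W ω) :=
      condExp_of_stronglyMeasurable hmAW ((hQbar₀_meas.comp hAWm).stronglyMeasurable) hqint
    have hsub := condExp_sub (μ := P)
      (m := MeasurableSpace.comap (fun ω => (A ω, W ω)) inferInstance)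
      (f := Y) (g := fun ω => Qbar₀ (A ω, W ω)) hYint hqint
    have hcz : P[(fun ω => Y ω - Qbar₀ (A ω, W ω))
          | MeasurableSpace.comap (fun ω => (A ω, W ω)) inferInstance] =ᵐ[P] 0 := by
      have e0 : (fun ω => Y ω - Qbar₀ (A ω, W ω)) = Y - fun ω => Qbar₀ (A ω, W ω) := rfl
      rw [e0]
      filter_upwards [hsub, hQbar₀_condexp] with ω e1 e2
      rw [e1]
      simp [Pi.sub_apply, Pi.zero_apply, hqfix, e2]
    have hzz : (fun ω => H' (A ω, W ω) * (P[(fun ω => Y ω - Qbar₀ (A ω, W ω))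
          | MeasurableSpace.comap (fun ω => (A ω, W ω)) inferInstance]) ω)
        =ᵐ[P] fun _ => (0 : ℝ) := by
      filter_upwards [hcz] with ω e
      rw [e]
      simp
    rw [integral_congr_ae hzz]
    simp
  have hD0 : ∫ ω, D ω ∂P = 0 := by
    have hsplit : ∫ ω, D ω ∂P = ∫ ω, H' (A ω, W ω) * (Y ω - Qbar₀ (A ω, W ω)) ∂P
        + ∫ ω, Qbar₀ (A ω + δ (W ω), W ω) ∂P - ψ₀ := by
      have e0 : ∫ ω, D ω ∂P = ∫ ω, (H' (A ω, W ω) * (Y ω - Qbar₀ (A ω, W ω))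
          + Qbar₀ (A ω + δ (W ω), W ω) - ψ₀) ∂P := rfl
      have hsum_int : Integrable (fun ω => H' (A ω, W ω) * (Y ω - Qbar₀ (A ω, W ω))
          + Qbar₀ (A ω + δ (W ω), W ω)) P := hXint.add hq'int
      have h1 : ∫ ω, (H' (A ω, W ω) * (Y ω - Qbar₀ (A ω, W ω))
            + Qbar₀ (A ω + δ (W ω), W ω) - ψ₀) ∂P
          = ∫ ω, (H' (A ω, W ω) * (Y ω - Qbar₀ (A ω, W ω))
            + Qbar₀ (A ω + δ (W ω), W ω)) ∂P - ∫ _ω, (ψ₀ : ℝ) ∂P :=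
        integral_sub hsum_int (integrable_const ψ₀)
      have h2 : ∫ ω, (H' (A ω, W ω) * (Y ω - Qbar₀ (A ω, W ω))
            + Qbar₀ (A ω + δ (W ω), W ω)) ∂P
          = ∫ ω, H' (A ω, W ω) * (Y ω - Qbar₀ (A ω, W ω)) ∂P
            + ∫ ω, Qbar₀ (A ω + δ (W ω), W ω) ∂P :=
        integral_add hXint hq'int
      rw [e0, h1, h2, integral_const]
      simp
    rw [hsplit, hX0, ← hψ₀]
    ring
  -- Part B : `∫ C·k = 0`
  have hkey := my_condexp_sup_comap_of_condIndepFun hm' hC hA hC01 hCAR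
  have hkm'' : StronglyMeasurable[MeasurableSpace.comap (fun ω => (Y ω, W ω)) inferInstance
      ⊔ MeasurableSpace.comap A inferInstance] k := by
    have hA'' : Measurable[MeasurableSpace.comap (fun ω => (Y ω, W ω)) inferInstance
        ⊔ MeasurableSpace.comap A inferInstance] A := measurable_iff_comap_le.mpr le_sup_right
    have hYW'' : Measurable[MeasurableSpace.comap (fun ω => (Y ω, W ω)) inferInstance
        ⊔ MeasurableSpace.comap A inferInstance] fun ω => (Y ω, W ω) :=
      measurable_iff_comap_le.mpr le_sup_left
    have hY'' : Measurable[MeasurableSpace.comap (fun ω => (Y ω, W ω)) inferInstance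
        ⊔ MeasurableSpace.comap A inferInstance] Y := measurable_fst.comp hYW''
    have hW'' : Measurable[MeasurableSpace.comap (fun ω => (Y ω, W ω)) inferInstance
        ⊔ MeasurableSpace.comap A inferInstance] W := measurable_snd.comp hYW''
    exact (((hg_meas.comp hYW'').inv).mul
      ((((hH'_meas.comp (hA''.prodMk hW'')).mul
          (hY''.sub (hQbar₀_meas.comp (hA''.prodMk hW'')))).add
        (hQbar₀_meas.comp ((hA''.add (hδ.comp hW'')).prodMk hW'')) |>.sub
          measurable_const).sub (hG_meas.comp hYW''))).stronglyMeasurable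
  have hCk0 : ∫ ω, C ω * k ω ∂P = 0 := by
    have e1 : ∫ ω, C ω * k ω ∂P = ∫ ω, k ω * C ω ∂P :=
      integral_congr_ae (Filter.Eventually.of_forall fun ω => mul_comm _ _)
    have e2 := my_integral_mul_condexp_right hm'' hkm'' (h := k) (k := C) hkC_int hCint
    have e3 : ∫ ω, k ω * (P[C | MeasurableSpace.comap (fun ω => (Y ω, W ω)) inferInstance
          ⊔ MeasurableSpace.comap A inferInstance]) ω ∂P
        = ∫ ω, k ω * (P[C | MeasurableSpace.comap (fun ω => (Y ω, W ω)) inferInstance]) ω ∂P :=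
      integral_congr_ae (by filter_upwards [hkey] with ω e; rw [e])
    have e4 : ∫ ω, k ω * (P[C | MeasurableSpace.comap (fun ω => (Y ω, W ω)) inferInstance]) ω ∂P
        = ∫ ω, (P[C | MeasurableSpace.comap (fun ω => (Y ω, W ω)) inferInstance]) ω * k ω ∂P :=
      integral_congr_ae (Filter.Eventually.of_forall fun ω => mul_comm _ _)
    have hcondk_int : Integrable (fun ω =>
        (P[C | MeasurableSpace.comap (fun ω => (Y ω, W ω)) inferInstance]) ω * k ω) P :=
      (Integrable.bdd_mul (c := ε'⁻¹ * (MH * (MY + MQ) + MQ + |ψ₀| + MG)) integrable_condExp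
        hk_meas.aestronglyMeasurable
        (Filter.Eventually.of_forall fun ω => by
          simpa [Real.norm_eq_abs] using hkbd ω)).congr
        (Filter.Eventually.of_forall fun ω => mul_comm _ _)
    have e5 := my_integral_mul_condexp_right hm' stronglyMeasurable_condExp
      (h := P[C | MeasurableSpace.comap (fun ω => (Y ω, W ω)) inferInstance]) (k := k)
      hcondk_int hkint
    -- `P[k|m'] = 0` a.e.
    have hGfix : P[Gf | MeasurableSpace.comap (fun ω => (Y ω, W ω)) inferInstance] = Gf :=
      condExp_of_stronglyMeasurable hm' (hG_meas.comp hYWm').stronglyMeasurable hGfint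
    have hsub2 := condExp_sub (μ := P)
      (m := MeasurableSpace.comap (fun ω => (Y ω, W ω)) inferInstance)
      (f := D) (g := Gf) hDint hGfint
    have hDGm : P[(fun ω => D ω - Gf ω)
          | MeasurableSpace.comap (fun ω => (Y ω, W ω)) inferInstance] =ᵐ[P] 0 := by
      have e0 : (fun ω => D ω - Gf ω) = D - Gf := rfl
      rw [e0]
      filter_upwards [hsub2, hG_condexp] with ω f1 f2
      rw [f1]
      simp [Pi.sub_apply, Pi.zero_apply, hGfix, f2]
    have hginvSM : StronglyMeasurable[MeasurableSpace.comap
        (fun ω => (Y ω, W ω)) inferInstance] fun ω => (g (Y ω, W ω))⁻¹ :=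
      ((hg_meas.comp hYWm').inv).stronglyMeasurable
    have hkint' : Integrable ((fun ω => (g (Y ω, W ω))⁻¹) * fun ω => D ω - Gf ω) P := hkint
    have hDGint : Integrable (fun ω => D ω - Gf ω) P := hDint.sub hGfint
    have hmul := condExp_mul_of_stronglyMeasurable_left (μ := P)
      (m := MeasurableSpace.comap (fun ω => (Y ω, W ω)) inferInstance)
      hginvSM hkint' hDGint
    have hk0 : P[k | MeasurableSpace.comap (fun ω => (Y ω, W ω)) inferInstance] =ᵐ[P] 0 := by
      have hkrepr : k = (fun ω => (g (Y ω, W ω))⁻¹) * fun ω => D ω - Gf ω := rfl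
      rw [hkrepr]
      filter_upwards [hmul, hDGm] with ω f1 f2
      rw [f1]
      simp only [Pi.mul_apply, Pi.zero_apply] at *
      rw [f2]
      simp
    have e6 : ∫ ω, (P[C | MeasurableSpace.comap (fun ω => (Y ω, W ω)) inferInstance]) ω
        * (P[k | MeasurableSpace.comap (fun ω => (Y ω, W ω)) inferInstance]) ω ∂P = 0 := by
      have hzz : (fun ω => (P[C | MeasurableSpace.comap (fun ω => (Y ω, W ω)) inferInstance]) ω
          * (P[k | MeasurableSpace.comap (fun ω => (Y ω, W ω)) inferInstance]) ω)
          =ᵐ[P] fun _ => (0 : ℝ) := by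
        filter_upwards [hk0] with ω e
        simp only [Pi.zero_apply] at e
        rw [e]
        simp
      rw [integral_congr_ae hzz]
      simp
    rw [e1, e2, e3, e4, e5]
    exact e6
  -- assemble
  have hpoint : ∀ ω, (C ω / g (Y ω, W ω))
        * (H' (A ω, W ω) * (Y ω - Qbar₀ (A ω, W ω)) + Qbar₀ (A ω + δ (W ω), W ω) - ψ₀)
      - (C ω / g (Y ω, W ω) - 1) * G (Y ω, W ω) = C ω * k ω + Gf ω := by
    intro ω
    have hne : g (Y ω, W ω) ≠ 0 := ne_of_gt (hgfpos ω)
    show _ = C ω * ((g (Y ω, W ω))⁻¹ * ((H' (A ω, W ω) * (Y ω - Qbar₀ (A ω, W ω))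
      + Qbar₀ (A ω + δ (W ω), W ω) - ψ₀) - G (Y ω, W ω))) + G (Y ω, W ω)
    field_simp
    ring
  have hfin : ∫ ω, (C ω * k ω + Gf ω) ∂P = 0 := by
    rw [integral_add hCk_int hGfint, hCk0, hGf_eq, hD0]
    ring
  exact (integral_congr_ae (Filter.Eventually.of_forall hpoint)).trans hfin
end

section
/- Variance decomposition of the observed-data efficient influence function: let D^F : 𝒲 × ℝ × ℝ → ℝ be bounded measurable and let G₀ : ℝ × 𝒲 → ℝ be a bounded measurable function with G₀(Y, W) = E[D^F(W, A, Y) ∣ σ(Y, W)] a.s. Then E[((C / g₀(Y, W)) D^F(W, A, Y) − (C / g₀(Y, W) − 1) G₀(Y, W))²] = E[D^F(W, A, Y)²] + E[(1 / g₀(Y, W) − 1) · (D^F(W, A, Y) − G₀(Y, W))²]. Hence the second moment of the observed-data influence function exceeds that of the full-data influence function by an inflation term reflecting the two-phase sampling. -/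
open MeasureTheory ProbabilityTheory
open scoped ENNReal NNReal

lemma aux_CAR_integral_eq
    {Ω 𝒲 : Type*} {m : MeasurableSpace Ω}
    [mΩ : MeasurableSpace Ω] [StandardBorelSpace Ω] [Nonempty Ω]
    [MeasurableSpace 𝒲] (hm : m ≤ mΩ)
    (P : Measure Ω) [IsProbabilityMeasure P]
    (W : Ω → 𝒲) (hW : Measurable W)
    (A : Ω → ℝ) (hA : Measurable A)
    (Y : Ω → ℝ) (hY : Measurable Y)
    (C : Ω → ℝ) (hC : Measurable C) (hC01 : ∀ ω, C ω = 0 ∨ C ω = 1)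
    (g₀ : ℝ × 𝒲 → ℝ) (hg₀_meas : Measurable g₀)
    (hg01 : ∀ x, 0 ≤ g₀ x ∧ g₀ x ≤ 1)
    (hg₀_condexp : P[C | m] =ᵐ[P] fun ω => g₀ (Y ω, W ω))
    (hCAR : CondIndepFun m hm C A P)
    (hmYW : ∀ s : Set (ℝ × 𝒲), MeasurableSet s →
      MeasurableSet[m] ((fun ω => (Y ω, W ω)) ⁻¹' s))
    (h : ℝ × ℝ × 𝒲 → ℝ) (hh : Measurable h) (M : ℝ) (hM : ∀ x, |h x| ≤ M) :
    ∫ ω, C ω * h (A ω, Y ω, W ω) ∂P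
      = ∫ ω, g₀ (Y ω, W ω) * h (A ω, Y ω, W ω) ∂P := by
  set YW : Ω → ℝ × 𝒲 := fun ω => (Y ω, W ω) with hYW_def
  have hYW : Measurable YW := hY.prodMk hW
  have hYWm : Measurable[m] YW := fun s hs => hmYW s hs
  have hgm : Measurable[m] fun ω => g₀ (YW ω) := hg₀_meas.comp hYWm
  have hC0 : ∀ ω, 0 ≤ C ω := fun ω => by rcases hC01 ω with h'|h' <;> rw [h'] <;> norm_num
  have hC1 : ∀ ω, C ω ≤ 1 := fun ω => by rcases hC01 ω with h'|h' <;> rw [h'] <;> norm_num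
  -- integrability helper
  have intg : ∀ (f : Ω → ℝ), Measurable f → ∀ (K : ℝ), (∀ ω, |f ω| ≤ K) → Integrable f P :=
    fun f hf K hK => (integrable_const K).mono' hf.aestronglyMeasurable
      (Filter.Eventually.of_forall fun ω => by simpa [Real.norm_eq_abs] using hK ω)
  have hCint : Integrable C P := intg C hC 1 fun ω => by
    rw [abs_of_nonneg (hC0 ω)]; exact hC1 ω
  have hgint : Integrable (fun ω => g₀ (YW ω)) P :=
    intg _ (hg₀_meas.comp hYW) 1 fun ω => by
      rw [abs_of_nonneg (hg01 (YW ω)).1]; exact (hg01 (YW ω)).2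
  -- the set S where C = 1
  set S : Set Ω := C ⁻¹' {1} with hS_def
  have hS : MeasurableSet S := hC (measurableSet_singleton 1)
  have hCS : C = S.indicator fun _ => (1 : ℝ) := by
    funext ω
    rcases hC01 ω with h'|h'
    · rw [h', Set.indicator_of_notMem]
      simp only [hS_def, Set.mem_preimage, Set.mem_singleton_iff, h']
      norm_num
    · rw [h', Set.indicator_of_mem]
      simp only [hS_def, Set.mem_preimage, Set.mem_singleton_iff, h']
  -- key set-integral identity
  have key : ∀ t : Set ℝ, MeasurableSet t → ∀ u : Set (ℝ × 𝒲), MeasurableSet u →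
      ∫ ω in A ⁻¹' t ∩ YW ⁻¹' u, C ω ∂P = ∫ ω in A ⁻¹' t ∩ YW ⁻¹' u, g₀ (YW ω) ∂P := by
    intro t ht u hu
    set t' : Set Ω := A ⁻¹' t with ht'_def
    have ht' : MeasurableSet t' := hA ht
    set u' : Set Ω := YW ⁻¹' u with hu'_def
    have hu'm : MeasurableSet[m] u' := hmYW u hu
    have hu' : MeasurableSet u' := hm _ hu'm
    have hind_int : Integrable (Set.indicator t' fun _ => (1:ℝ)) P :=
      intg _ (measurable_one.indicator ht') 1 fun ω => by
        rcases Set.indicator_eq_zero_or_self t' (fun _ => (1:ℝ)) ω with h'|h' <;>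
          rw [h'] <;> norm_num
    -- conditional independence factorization
    have hSm : MeasurableSet[MeasurableSpace.comap C inferInstance] S :=
      ⟨{1}, measurableSet_singleton 1, rfl⟩
    have ht'm : MeasurableSet[MeasurableSpace.comap A inferInstance] t' :=
      ⟨t, ht, rfl⟩
    have hfac : (P⟦S ∩ t' | m⟧) =ᵐ[P] (P⟦S | m⟧) * (P⟦t' | m⟧) :=
      ((condIndepFun_iff m hm C A hC hA P).mp hCAR) S t' hSm ht'm
    have hCE : (P⟦S | m⟧) =ᵐ[P] fun ω => g₀ (YW ω) := by
      have : (P⟦S | m⟧) = P[C | m] := by rw [hCS]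
      rw [this]; exact hg₀_condexp
    -- left side
    have hLind : (fun ω => Set.indicator t' C ω)
        = Set.indicator (S ∩ t') fun _ => (1:ℝ) := by
      funext ω
      by_cases hωt : ω ∈ t'
      · rw [Set.indicator_of_mem hωt]
        rcases hC01 ω with h'|h'
        · rw [h', Set.indicator_of_notMem]
          rintro ⟨hωS, -⟩
          simp only [hS_def, Set.mem_preimage, Set.mem_singleton_iff] at hωS
          rw [hωS] at h'; norm_num at h'
        · rw [h', Set.indicator_of_mem]
          exact ⟨by simp [hS_def, h'], hωt⟩
      · rw [Set.indicator_of_notMem hωt, Set.indicator_of_notMem]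
        rintro ⟨-, hωt'⟩; exact hωt hωt'
    have hLint : Integrable (Set.indicator (S ∩ t') fun _ => (1:ℝ)) P :=
      intg _ (measurable_one.indicator (hS.inter ht')) 1 fun ω => by
        rcases Set.indicator_eq_zero_or_self (S ∩ t') (fun _ => (1:ℝ)) ω with h'|h' <;>
          rw [h'] <;> norm_num
    have hL : ∫ ω in t' ∩ u', C ω ∂P
        = ∫ ω in u', ((P⟦S | m⟧) * (P⟦t' | m⟧)) ω ∂P := by
      rw [Set.inter_comm, ← setIntegral_indicator ht']
      calc ∫ ω in u', Set.indicator t' C ω ∂P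
          = ∫ ω in u', Set.indicator (S ∩ t') (fun _ => (1:ℝ)) ω ∂P := by rw [hLind]
        _ = ∫ ω in u', (P⟦S ∩ t' | m⟧) ω ∂P := (setIntegral_condExp hm hLint hu'm).symm
        _ = ∫ ω in u', ((P⟦S | m⟧) * (P⟦t' | m⟧)) ω ∂P :=
            setIntegral_congr_ae hu' (hfac.mono fun ω hω => fun _ => hω)
    -- right side
    have hmul_int : Integrable ((fun ω => g₀ (YW ω)) * Set.indicator t' fun _ => (1:ℝ)) P :=
      intg _ ((hg₀_meas.comp hYW).mul (measurable_one.indicator ht')) 1 fun ω => by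
        simp only [Pi.mul_apply, abs_mul]
        rcases Set.indicator_eq_zero_or_self t' (fun _ => (1:ℝ)) ω with h'|h' <;> rw [h']
        · norm_num
        · rw [abs_one, mul_one, abs_of_nonneg (hg01 (YW ω)).1]; exact (hg01 (YW ω)).2
    have hpull : P[(fun ω => g₀ (YW ω)) * Set.indicator t' (fun _ => (1:ℝ)) | m]
        =ᵐ[P] (fun ω => g₀ (YW ω)) * (P⟦t' | m⟧) :=
      condExp_mul_of_stronglyMeasurable_left hgm.stronglyMeasurable hmul_int hind_int
    have hR : ∫ ω in t' ∩ u', g₀ (YW ω) ∂P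
        = ∫ ω in u', ((fun ω => g₀ (YW ω)) * (P⟦t' | m⟧)) ω ∂P := by
      rw [Set.inter_comm, ← setIntegral_indicator ht']
      have hind_eq : ∀ ω, Set.indicator t' (fun ω => g₀ (YW ω)) ω
          = ((fun ω => g₀ (YW ω)) * Set.indicator t' fun _ => (1:ℝ)) ω := by
        intro ω
        by_cases hωt : ω ∈ t'
        · rw [Set.indicator_of_mem hωt]
          simp [Set.indicator_of_mem hωt]
        · rw [Set.indicator_of_notMem hωt]
          simp [Set.indicator_of_notMem hωt]
      calc ∫ ω in u', Set.indicator t' (fun ω => g₀ (YW ω)) ω ∂P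
          = ∫ ω in u', ((fun ω => g₀ (YW ω)) * Set.indicator t' fun _ => (1:ℝ)) ω ∂P := by
            exact setIntegral_congr_ae hu' (Filter.Eventually.of_forall
              (fun ω => fun _ => hind_eq ω))
        _ = ∫ ω in u', (P[(fun ω => g₀ (YW ω)) * Set.indicator t' (fun _ => (1:ℝ)) | m]) ω ∂P :=
            (setIntegral_condExp hm hmul_int hu'm).symm
        _ = ∫ ω in u', ((fun ω => g₀ (YW ω)) * (P⟦t' | m⟧)) ω ∂P :=
            setIntegral_congr_ae hu' (hpull.mono fun ω hω => fun _ => hω)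
    rw [hL, hR]
    refine setIntegral_congr_ae hu' ?_
    filter_upwards [hCE] with ω hω _
    simp only [Pi.mul_apply, hω]
  -- build the two finite measures and show they agree
  set T : Ω → ℝ × (ℝ × 𝒲) := fun ω => (A ω, YW ω) with hT_def
  have hT : Measurable T := hA.prodMk hYW
  have hd₁ : Measurable fun ω => (C ω).toNNReal := hC.real_toNNReal
  have hd₂ : Measurable fun ω => (g₀ (YW ω)).toNNReal := (hg₀_meas.comp hYW).real_toNNReal
  set ν₁ : Measure (ℝ × (ℝ × 𝒲)) :=
    (P.withDensity fun ω => ((C ω).toNNReal : ℝ≥0∞)).map T with hν₁_def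
  set ν₂ : Measure (ℝ × (ℝ × 𝒲)) :=
    (P.withDensity fun ω => ((g₀ (YW ω)).toNNReal : ℝ≥0∞)).map T with hν₂_def
  have hrect : ∀ t : Set ℝ, MeasurableSet t → ∀ u : Set (ℝ × 𝒲), MeasurableSet u →
      ν₁ (t ×ˢ u) = ν₂ (t ×ˢ u) := by
    intro t ht u hu
    have hpre : T ⁻¹' (t ×ˢ u) = A ⁻¹' t ∩ YW ⁻¹' u := by
      ext ω; simp [hT_def, Set.mem_prod]
    have hmeas : MeasurableSet (A ⁻¹' t ∩ YW ⁻¹' u) := (hA ht).inter (hYW hu)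
    rw [hν₁_def, hν₂_def, Measure.map_apply hT (ht.prod hu),
      Measure.map_apply hT (ht.prod hu), hpre,
      withDensity_apply _ hmeas, withDensity_apply _ hmeas]
    have e₁ : ∫⁻ ω in A ⁻¹' t ∩ YW ⁻¹' u, ((C ω).toNNReal : ℝ≥0∞) ∂P
        = ENNReal.ofReal (∫ ω in A ⁻¹' t ∩ YW ⁻¹' u, C ω ∂P) := by
      rw [ofReal_integral_eq_lintegral_ofReal (hCint.restrict)
        (Filter.Eventually.of_forall fun ω => hC0 ω)]
      rfl
    have e₂ : ∫⁻ ω in A ⁻¹' t ∩ YW ⁻¹' u, ((g₀ (YW ω)).toNNReal : ℝ≥0∞) ∂P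
        = ENNReal.ofReal (∫ ω in A ⁻¹' t ∩ YW ⁻¹' u, g₀ (YW ω) ∂P) := by
      rw [ofReal_integral_eq_lintegral_ofReal (hgint.restrict)
        (Filter.Eventually.of_forall fun ω => (hg01 (YW ω)).1)]
      rfl
    rw [e₁, e₂, key t ht u hu]
  haveI : IsFiniteMeasure ν₁ := by
    constructor
    rw [hν₁_def, Measure.map_apply hT MeasurableSet.univ, Set.preimage_univ,
      withDensity_apply _ MeasurableSet.univ, Measure.restrict_univ]
    calc ∫⁻ ω, ((C ω).toNNReal : ℝ≥0∞) ∂P ≤ ∫⁻ _, 1 ∂P := by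
          refine lintegral_mono fun ω => ?_
          simp only [ENNReal.coe_le_one_iff]
          exact Real.toNNReal_le_one.mpr (hC1 ω)
      _ < ⊤ := by simp
  haveI : IsFiniteMeasure ν₂ := by
    constructor
    rw [hν₂_def, Measure.map_apply hT MeasurableSet.univ, Set.preimage_univ,
      withDensity_apply _ MeasurableSet.univ, Measure.restrict_univ]
    calc ∫⁻ ω, ((g₀ (YW ω)).toNNReal : ℝ≥0∞) ∂P ≤ ∫⁻ _, 1 ∂P := by
          refine lintegral_mono fun ω => ?_
          simp only [ENNReal.coe_le_one_iff]
          exact Real.toNNReal_le_one.mpr (hg01 (YW ω)).2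
      _ < ⊤ := by simp
  have hνeq : ν₁ = ν₂ := by
    refine ext_of_generate_finite _ generateFrom_prod.symm isPiSystem_prod ?_ ?_
    · rintro s ⟨t, ht, u, hu, rfl⟩
      exact hrect t ht u hu
    · rw [← Set.univ_prod_univ]
      exact hrect _ MeasurableSet.univ _ MeasurableSet.univ
  -- conclude
  have trans₁ : ∫ x, h x ∂ν₁ = ∫ ω, C ω * h (A ω, Y ω, W ω) ∂P := by
    rw [hν₁_def, integral_map hT.aemeasurable hh.aestronglyMeasurable,
      integral_withDensity_eq_integral_smul hd₁]
    refine integral_congr_ae (Filter.Eventually.of_forall fun ω => ?_)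
    simp only [NNReal.smul_def, Real.coe_toNNReal _ (hC0 ω), smul_eq_mul, hT_def, hYW_def]
  have trans₂ : ∫ x, h x ∂ν₂ = ∫ ω, g₀ (Y ω, W ω) * h (A ω, Y ω, W ω) ∂P := by
    rw [hν₂_def, integral_map hT.aemeasurable hh.aestronglyMeasurable,
      integral_withDensity_eq_integral_smul hd₂]
    refine integral_congr_ae (Filter.Eventually.of_forall fun ω => ?_)
    simp only [NNReal.smul_def, Real.coe_toNNReal _ (hg01 (Y ω, W ω)).1, smul_eq_mul, hT_def, hYW_def]
  rw [← trans₁, ← trans₂, hνeq]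
/-- Variance decomposition of the observed-data efficient influence function:
the second moment of the observed-data influence function equals that of the
full-data influence function plus an inflation term reflecting two-phase
sampling. -/
theorem observed_data_eif_variance_decomposition
    {Ω 𝒲 : Type*} [MeasurableSpace Ω] [StandardBorelSpace Ω] [Nonempty Ω]
    [MeasurableSpace 𝒲]
    (P : Measure Ω) [IsProbabilityMeasure P]
    (W : Ω → 𝒲) (hW : Measurable W)
    (A : Ω → ℝ) (hA : Measurable A)
    (Y : Ω → ℝ) (hY : Measurable Y)
    (C : Ω → ℝ) (hC : Measurable C) (hC01 : ∀ ω, C ω = 0 ∨ C ω = 1)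
    (g₀ : ℝ × 𝒲 → ℝ) (hg₀_meas : Measurable g₀)
    (ε : ℝ) (hε : 0 < ε) (hg₀_bd : ∀ x, ε ≤ g₀ x ∧ g₀ x ≤ 1)
    (hg₀_condexp :
      P[C | MeasurableSpace.comap (fun ω => (Y ω, W ω)) inferInstance]
        =ᵐ[P] fun ω => g₀ (Y ω, W ω))
    (hCAR : CondIndepFun
      (MeasurableSpace.comap (fun ω => (Y ω, W ω)) inferInstance)
      ((hY.prodMk hW).comap_le) C A P)
    (DF : 𝒲 × ℝ × ℝ → ℝ) (hDF_meas : Measurable DF)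
    (hDF_bd : ∃ M : ℝ, ∀ x, |DF x| ≤ M)
    (G₀ : ℝ × 𝒲 → ℝ) (hG₀_meas : Measurable G₀) (hG₀_bd : ∃ M : ℝ, ∀ x, |G₀ x| ≤ M)
    (hG₀_condexp :
      P[fun ω => DF (W ω, A ω, Y ω)
        | MeasurableSpace.comap (fun ω => (Y ω, W ω)) inferInstance]
        =ᵐ[P] fun ω => G₀ (Y ω, W ω)) :
    ∫ ω, ((C ω / g₀ (Y ω, W ω)) * DF (W ω, A ω, Y ω)
        - (C ω / g₀ (Y ω, W ω) - 1) * G₀ (Y ω, W ω)) ^ 2 ∂P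
      = (∫ ω, DF (W ω, A ω, Y ω) ^ 2 ∂P)
        + ∫ ω, (1 / g₀ (Y ω, W ω) - 1)
            * (DF (W ω, A ω, Y ω) - G₀ (Y ω, W ω)) ^ 2 ∂P := by
  obtain ⟨M₁, hM₁⟩ := hDF_bd
  obtain ⟨M₂, hM₂⟩ := hG₀_bd
  set B : ℝ := |M₁| + |M₂| with hB_def
  have hDFb : ∀ x, |DF x| ≤ |M₁| := fun x => (hM₁ x).trans (le_abs_self _)
  have hG₀b : ∀ x, |G₀ x| ≤ |M₂| := fun x => (hM₂ x).trans (le_abs_self _)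
  have hg01 : ∀ x, 0 ≤ g₀ x ∧ g₀ x ≤ 1 :=
    fun x => ⟨hε.le.trans (hg₀_bd x).1, (hg₀_bd x).2⟩
  have hgpos : ∀ x : ℝ × 𝒲, 0 < g₀ x := fun x => hε.trans_le (hg₀_bd x).1
  have hgne : ∀ x : ℝ × 𝒲, g₀ x ≠ 0 := fun x => (hgpos x).ne'
  have hYW : Measurable fun ω => (Y ω, W ω) := hY.prodMk hW
  have hWAY : Measurable fun ω => (W ω, A ω, Y ω) := hW.prodMk (hA.prodMk hY)
  have hT : Measurable fun ω => (A ω, Y ω, W ω) := hA.prodMk hYW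
  have hmYW : ∀ s : Set (ℝ × 𝒲), MeasurableSet s →
      MeasurableSet[MeasurableSpace.comap (fun ω => (Y ω, W ω)) inferInstance]
        ((fun ω => (Y ω, W ω)) ⁻¹' s) := fun s hs => ⟨s, hs, rfl⟩
  -- the two auxiliary functions on ℝ × ℝ × 𝒲
  set h₁ : ℝ × ℝ × 𝒲 → ℝ :=
    fun x => ((DF (x.2.2, x.1, x.2.1) - G₀ x.2) / g₀ x.2) ^ 2 with hh₁_def
  set h₂ : ℝ × ℝ × 𝒲 → ℝ :=
    fun x => (DF (x.2.2, x.1, x.2.1) - G₀ x.2) * G₀ x.2 / g₀ x.2 with hh₂_def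
  have hperm : Measurable fun x : ℝ × ℝ × 𝒲 => (x.2.2, x.1, x.2.1) :=
    measurable_snd.snd.prodMk (measurable_fst.prodMk measurable_snd.fst)
  have hDGx : Measurable fun x : ℝ × ℝ × 𝒲 => DF (x.2.2, x.1, x.2.1) - G₀ x.2 :=
    (hDF_meas.comp hperm).sub (hG₀_meas.comp measurable_snd)
  have hmeas₁ : Measurable h₁ :=
    (hDGx.div (hg₀_meas.comp measurable_snd)).pow_const 2
  have hmeas₂ : Measurable h₂ :=
    (hDGx.mul (hG₀_meas.comp measurable_snd)).div (hg₀_meas.comp measurable_snd)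
  have hDGb : ∀ x : ℝ × ℝ × 𝒲, |DF (x.2.2, x.1, x.2.1) - G₀ x.2| ≤ B := fun x =>
    (abs_sub _ _).trans (add_le_add (hDFb _) (hG₀b _))
  have hBnn : 0 ≤ B := add_nonneg (abs_nonneg _) (abs_nonneg _)
  have hb₁ : ∀ x, |h₁ x| ≤ (B / ε) ^ 2 := by
    intro x
    rw [hh₁_def]
    simp only
    rw [abs_pow]
    refine pow_le_pow_left₀ (abs_nonneg _) ?_ 2
    rw [abs_div, abs_of_pos (hgpos x.2)]
    exact div_le_div₀ hBnn (hDGb x) hε (hg₀_bd x.2).1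
  have hb₂ : ∀ x, |h₂ x| ≤ B * |M₂| / ε := by
    intro x
    rw [hh₂_def]
    simp only
    rw [abs_div, abs_of_pos (hgpos x.2), abs_mul]
    refine div_le_div₀ (mul_nonneg hBnn (abs_nonneg _)) ?_ hε (hg₀_bd x.2).1
    exact mul_le_mul (hDGb x) (hG₀b _) (abs_nonneg _) hBnn
  -- integrability helper
  have intg : ∀ (f : Ω → ℝ), Measurable f → ∀ (K : ℝ), (∀ ω, |f ω| ≤ K) → Integrable f P :=
    fun f hf K hK => (integrable_const K).mono' hf.aestronglyMeasurable
      (Filter.Eventually.of_forall fun ω => by simpa [Real.norm_eq_abs] using hK ω)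
  have hCabs : ∀ ω, |C ω| ≤ 1 := fun ω => by
    rcases hC01 ω with h'|h' <;> rw [h'] <;> norm_num
  have hgabs : ∀ x : ℝ × 𝒲, |g₀ x| ≤ 1 := fun x => by
    rw [abs_of_pos (hgpos x)]; exact (hg₀_bd x).2
  have mul_bd : ∀ (a b K L : ℝ), |a| ≤ K → |b| ≤ L → 0 ≤ L → |a * b| ≤ K * L := by
    intro a b K L hK hL hLnn
    rw [abs_mul]
    exact mul_le_mul hK hL (abs_nonneg _) ((abs_nonneg a).trans hK)
  have iCh₁ : Integrable (fun ω => C ω * h₁ (A ω, Y ω, W ω)) P := by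
    refine intg _ (hC.mul (hmeas₁.comp hT)) ((B / ε) ^ 2) fun ω => ?_
    simpa using mul_bd _ _ 1 ((B / ε) ^ 2) (hCabs ω) (hb₁ _) (by positivity)
  have iCh₂ : Integrable (fun ω => C ω * h₂ (A ω, Y ω, W ω)) P := by
    refine intg _ (hC.mul (hmeas₂.comp hT)) (B * |M₂| / ε) fun ω => ?_
    simpa using mul_bd _ _ 1 (B * |M₂| / ε) (hCabs ω) (hb₂ _) (by positivity)
  have igh₁ : Integrable (fun ω => g₀ (Y ω, W ω) * h₁ (A ω, Y ω, W ω)) P := by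
    refine intg _ ((hg₀_meas.comp hYW).mul (hmeas₁.comp hT)) ((B / ε) ^ 2) fun ω => ?_
    simpa using mul_bd _ _ 1 ((B / ε) ^ 2) (hgabs _) (hb₁ _) (by positivity)
  have igh₂ : Integrable (fun ω => g₀ (Y ω, W ω) * h₂ (A ω, Y ω, W ω)) P := by
    refine intg _ ((hg₀_meas.comp hYW).mul (hmeas₂.comp hT)) (B * |M₂| / ε) fun ω => ?_
    simpa using mul_bd _ _ 1 (B * |M₂| / ε) (hgabs _) (hb₂ _) (by positivity)
  have iG2 : Integrable (fun ω => G₀ (Y ω, W ω) ^ 2) P := by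
    refine intg _ ((hG₀_meas.comp hYW).pow_const 2) (|M₂| ^ 2) fun ω => ?_
    rw [abs_pow]
    exact pow_le_pow_left₀ (abs_nonneg _) (hG₀b _) 2
  have iD2 : Integrable (fun ω => DF (W ω, A ω, Y ω) ^ 2) P := by
    refine intg _ ((hDF_meas.comp hWAY).pow_const 2) (|M₁| ^ 2) fun ω => ?_
    rw [abs_pow]
    exact pow_le_pow_left₀ (abs_nonneg _) (hDFb _) 2
  have ifin : Integrable
      (fun ω => (1 / g₀ (Y ω, W ω) - 1) * (DF (W ω, A ω, Y ω) - G₀ (Y ω, W ω)) ^ 2) P := by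
    refine intg _ (((measurable_const.div (hg₀_meas.comp hYW)).sub measurable_const).mul
      (((hDF_meas.comp hWAY).sub (hG₀_meas.comp hYW)).pow_const 2)) ((1 / ε) * B ^ 2)
      fun ω => ?_
    refine mul_bd _ _ (1 / ε) (B ^ 2) ?_ ?_ (by positivity)
    · have h1 : (1:ℝ) ≤ 1 / g₀ (Y ω, W ω) := by
        rw [le_div_iff₀ (hgpos _), one_mul]; exact (hg₀_bd _).2
      have h2 : 1 / g₀ (Y ω, W ω) ≤ 1 / ε := one_div_le_one_div_of_le hε (hg₀_bd _).1
      rw [abs_of_nonneg (by linarith)]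
      linarith
    · rw [abs_pow]
      refine pow_le_pow_left₀ (abs_nonneg _) ?_ 2
      exact (abs_sub _ _).trans (add_le_add (hDFb _) (hG₀b _))
  have iCsum2 : Integrable
      (fun ω => 2 * (C ω * h₂ (A ω, Y ω, W ω)) + G₀ (Y ω, W ω) ^ 2) P :=
    (iCh₂.const_mul 2).add iG2
  have igsum2 : Integrable
      (fun ω => 2 * (g₀ (Y ω, W ω) * h₂ (A ω, Y ω, W ω)) + G₀ (Y ω, W ω) ^ 2) P :=
    (igh₂.const_mul 2).add iG2
  -- apply the CAR integral identity
  have master₁ := aux_CAR_integral_eq ((hY.prodMk hW).comap_le) P W hW A hA Y hY C hC hC01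
    g₀ hg₀_meas hg01 hg₀_condexp hCAR hmYW h₁ hmeas₁ ((B / ε) ^ 2) hb₁
  have master₂ := aux_CAR_integral_eq ((hY.prodMk hW).comap_le) P W hW A hA Y hY C hC hC01
    g₀ hg₀_meas hg01 hg₀_condexp hCAR hmYW h₂ hmeas₂ (B * |M₂| / ε) hb₂
  -- pointwise expansion
  have expand : ∀ ω, ((C ω / g₀ (Y ω, W ω)) * DF (W ω, A ω, Y ω)
      - (C ω / g₀ (Y ω, W ω) - 1) * G₀ (Y ω, W ω)) ^ 2
      = C ω * h₁ (A ω, Y ω, W ω)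
        + (2 * (C ω * h₂ (A ω, Y ω, W ω)) + G₀ (Y ω, W ω) ^ 2) := by
    intro ω
    have hcc : C ω * C ω = C ω := by rcases hC01 ω with h'|h' <;> rw [h'] <;> ring
    have hg' : g₀ (Y ω, W ω) ≠ 0 := hgne _
    have e : ((C ω / g₀ (Y ω, W ω)) * DF (W ω, A ω, Y ω)
        - (C ω / g₀ (Y ω, W ω) - 1) * G₀ (Y ω, W ω)) ^ 2
        = (C ω * C ω) * h₁ (A ω, Y ω, W ω)
          + (2 * (C ω * h₂ (A ω, Y ω, W ω)) + G₀ (Y ω, W ω) ^ 2) := by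
      rw [hh₁_def, hh₂_def]
      simp only
      field_simp
      ring
    rw [e, hcc]
  have regroup : ∀ ω, g₀ (Y ω, W ω) * h₁ (A ω, Y ω, W ω)
      + (2 * (g₀ (Y ω, W ω) * h₂ (A ω, Y ω, W ω)) + G₀ (Y ω, W ω) ^ 2)
      = DF (W ω, A ω, Y ω) ^ 2
        + (1 / g₀ (Y ω, W ω) - 1) * (DF (W ω, A ω, Y ω) - G₀ (Y ω, W ω)) ^ 2 := by
    intro ω
    have hg' : g₀ (Y ω, W ω) ≠ 0 := hgne _
    rw [hh₁_def, hh₂_def]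
    simp only
    field_simp
    ring
  calc ∫ ω, ((C ω / g₀ (Y ω, W ω)) * DF (W ω, A ω, Y ω)
        - (C ω / g₀ (Y ω, W ω) - 1) * G₀ (Y ω, W ω)) ^ 2 ∂P
      = ∫ ω, (C ω * h₁ (A ω, Y ω, W ω)
          + (2 * (C ω * h₂ (A ω, Y ω, W ω)) + G₀ (Y ω, W ω) ^ 2)) ∂P :=
        integral_congr_ae (Filter.Eventually.of_forall expand)
    _ = (∫ ω, C ω * h₁ (A ω, Y ω, W ω) ∂P)
        + ((∫ ω, 2 * (C ω * h₂ (A ω, Y ω, W ω)) ∂P) + ∫ ω, G₀ (Y ω, W ω) ^ 2 ∂P) := by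
        rw [integral_add iCh₁ iCsum2, integral_add (iCh₂.const_mul 2) iG2]
    _ = (∫ ω, g₀ (Y ω, W ω) * h₁ (A ω, Y ω, W ω) ∂P)
        + ((∫ ω, 2 * (g₀ (Y ω, W ω) * h₂ (A ω, Y ω, W ω)) ∂P)
          + ∫ ω, G₀ (Y ω, W ω) ^ 2 ∂P) := by
        rw [master₁, integral_const_mul, integral_const_mul, master₂]
    _ = ∫ ω, (g₀ (Y ω, W ω) * h₁ (A ω, Y ω, W ω)
          + (2 * (g₀ (Y ω, W ω) * h₂ (A ω, Y ω, W ω)) + G₀ (Y ω, W ω) ^ 2)) ∂P := by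
        rw [integral_add igh₁ igsum2, integral_add (igh₂.const_mul 2) iG2]
    _ = ∫ ω, (DF (W ω, A ω, Y ω) ^ 2
          + (1 / g₀ (Y ω, W ω) - 1) * (DF (W ω, A ω, Y ω) - G₀ (Y ω, W ω)) ^ 2) ∂P :=
        integral_congr_ae (Filter.Eventually.of_forall regroup)
    _ = (∫ ω, DF (W ω, A ω, Y ω) ^ 2 ∂P)
        + ∫ ω, (1 / g₀ (Y ω, W ω) - 1)
            * (DF (W ω, A ω, Y ω) - G₀ (Y ω, W ω)) ^ 2 ∂P :=
        integral_add iD2 ifin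
end
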